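/- arXiv:1503.07865 — 7 statements merged into one kernel-verified Lean document; each statement's English description precedes it below -/
import Mathlib

section
/- Let E : M_d(ℂ) → M_d(ℂ) be a hermiticity-preserving linear map. Then Tr[S · (E⊗E)(S)] = ∑_{k,l=1}^{d²} |Tr(A_k† E(A_l))|², i.e., it equals the squared Frobenius norm of the Liouville representation 𝓔 of E. -/
open Matrix Kronecker ComplexOrder MeasureTheory

/-- `d×d` complex matrices. -/
abbrev Mat (d : ℕ) := Matrix (Fin d) (Fin d) ℂ

/-- Matrices on `ℂ^d ⊗ ℂ^d`. -/
abbrev Mat2 (d : ℕ) := Matrix (Fin d × Fin d) (Fin d × Fin d) ℂ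

noncomputable instance matMeasurableSpace {m n : Type*} : MeasurableSpace (Matrix m n ℂ) :=
  borel _

variable {d : ℕ}

/-- Liouville representation of a linear map in the basis `A`:
`𝓔_{kl} = Tr((A k)† E (A l))`. -/
noncomputable def Liou (A : Fin (d ^ 2) → Mat d) (E : Mat d →ₗ[ℂ] Mat d) :
    Matrix (Fin (d ^ 2)) (Fin (d ^ 2)) ℂ :=
  Matrix.of fun k l => Matrix.trace ((A k)ᴴ * E (A l))

/-- The unitarity `u(E) = Tr(𝓔ᵤ† 𝓔ᵤ)/(d²-1)`, where `𝓔ᵤ` is the lower-right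
`(d²-1)×(d²-1)` (unital) block of the Liouville representation. -/
noncomputable def unitarity (A : Fin (d ^ 2) → Mat d) (E : Mat d →ₗ[ℂ] Mat d) : ℝ :=
  (∑ k ∈ Finset.univ.filter (fun k : Fin (d ^ 2) => (k : ℕ) ≠ 0),
    ∑ l ∈ Finset.univ.filter (fun l : Fin (d ^ 2) => (l : ℕ) ≠ 0),
      ‖Liou A E k l‖ ^ 2) / ((d : ℝ) ^ 2 - 1)

/-- `‖𝓔ₙ‖²`: squared Frobenius norm of the nonunital (bottom-left) column block. -/
noncomputable def nSq (A : Fin (d ^ 2) → Mat d) (E : Mat d →ₗ[ℂ] Mat d) : ℝ :=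
  ∑ k ∈ Finset.univ.filter (fun k : Fin (d ^ 2) => (k : ℕ) ≠ 0),
    ∑ l ∈ Finset.univ.filter (fun l : Fin (d ^ 2) => (l : ℕ) = 0),
      ‖Liou A E k l‖ ^ 2

/-- `‖𝓔_sdl‖²`: squared Frobenius norm of the state-dependent-leakage (top-right) row block. -/
noncomputable def sdlSq (A : Fin (d ^ 2) → Mat d) (E : Mat d →ₗ[ℂ] Mat d) : ℝ :=
  ∑ k ∈ Finset.univ.filter (fun k : Fin (d ^ 2) => (k : ℕ) = 0),
    ∑ l ∈ Finset.univ.filter (fun l : Fin (d ^ 2) => (l : ℕ) ≠ 0),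
      ‖Liou A E k l‖ ^ 2

/-- The average survival rate `S(E) = Tr(E(𝟙))/d` (real part). -/
noncomputable def survival (d : ℕ) (E : Mat d →ₗ[ℂ] Mat d) : ℝ :=
  (Matrix.trace (E 1)).re / d

/-- The swap operator `S` on `ℂ^d ⊗ ℂ^d`, `S(x⊗y) = y⊗x`. -/
def swap (d : ℕ) : Mat2 d :=
  Matrix.of fun p q => if p.1 = q.2 ∧ p.2 = q.1 then 1 else 0

/-- The Choi matrix `∑_{j,k} E(|j⟩⟨k|) ⊗ |j⟩⟨k|`. -/
noncomputable def choi (E : Mat d →ₗ[ℂ] Mat d) : Mat2 d :=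
  Matrix.of fun p q => E (Matrix.single p.2 q.2 1) p.1 q.1

/-- Complete positivity: the Choi matrix is positive semidefinite. -/
def IsCP (E : Mat d →ₗ[ℂ] Mat d) : Prop := (choi E).PosSemidef

/-- Trace preserving. -/
def IsTP (E : Mat d →ₗ[ℂ] Mat d) : Prop := ∀ X : Mat d, (E X).trace = X.trace

/-- Trace nonincreasing on positive semidefinite inputs (with the complex order). -/
def IsTNI (E : Mat d →ₗ[ℂ] Mat d) : Prop :=
  ∀ ρ : Mat d, ρ.PosSemidef → (E ρ).trace ≤ ρ.trace

/-- Hermiticity preserving. -/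
def IsHermPreserving (E : Mat d →ₗ[ℂ] Mat d) : Prop := ∀ X : Mat d, E Xᴴ = (E X)ᴴ

/-- The induced map `E ⊗ F` on `M_{d²}(ℂ) = M_d(ℂ) ⊗ M_d(ℂ)`; it is the unique
linear map satisfying `(E ⊗ F)(A ⊗ₖ B) = E(A) ⊗ₖ F(B)`. -/
noncomputable def tensorMap (E F : Mat d →ₗ[ℂ] Mat d) : Mat2 d →ₗ[ℂ] Mat2 d where
  toFun X := Matrix.of fun p q =>
    ∑ i : Fin d, ∑ j : Fin d, ∑ k : Fin d, ∑ l : Fin d,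
      X (i, k) (j, l) *
        (E (Matrix.single i j 1) p.1 q.1 * F (Matrix.single k l 1) p.2 q.2)
  map_add' X Y := by
    ext p q
    simp [Matrix.add_apply, add_mul, Finset.sum_add_distrib]
  map_smul' c X := by
    ext p q
    simp [Matrix.smul_apply, Finset.mul_sum, smul_eq_mul, mul_assoc]

/-- Conjugation `ρ ↦ U ρ Uᴴ` as a linear map. -/
noncomputable def conjMap (U : Mat d) : Mat d →ₗ[ℂ] Mat d :=
  LinearMap.mulLeft ℂ U ∘ₗ LinearMap.mulRight ℂ Uᴴ

/-- `B₁ = 𝟙_{d²}/d`. -/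
noncomputable def B1 (d : ℕ) : Mat2 d := ((d : ℂ))⁻¹ • 1

/-- `B₂ = (S - 𝟙_{d²}/d)/√(d²-1)`. -/
noncomputable def B2 (d : ℕ) : Mat2 d :=
  ((Real.sqrt ((d : ℝ) ^ 2 - 1) : ℂ))⁻¹ • (swap d - ((d : ℂ))⁻¹ • 1)

/-- The 2×2 matrix `M(E)` with entries `M_{ij} = Tr[Bᵢ† (E⊗E)(Bⱼ)]`. -/
noncomputable def Mmat (E : Mat d →ₗ[ℂ] Mat d) : Matrix (Fin 2) (Fin 2) ℂ :=
  Matrix.of fun i j =>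
    Matrix.trace ((![B1 d, B2 d] i)ᴴ * tensorMap E E (![B1 d, B2 d] j))

/-- Auxiliary: interleave noise `E` and unitary conjugations along a list. -/
noncomputable def seqAux (E : Mat d →ₗ[ℂ] Mat d) : List (Mat d) → Mat d → Mat d
  | [], σ => σ
  | U :: rest, σ => seqAux E rest (U * E σ * Uᴴ)

/-- The output state `(𝓤_{j_m} ∘ E ∘ 𝓤_{j_{m-1}} ∘ E ∘ ⋯ ∘ E ∘ 𝓤_{j_1})(ρ)` for the
sequence of unitaries given by the list (head applied first). -/
noncomputable def seqState (E : Mat d →ₗ[ℂ] Mat d) : List (Mat d) → Mat d → Mat d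
  | [], ρ => ρ
  | U :: rest, ρ => seqAux E rest (U * ρ * Uᴴ)


open scoped InnerProductSpace

section Aux

noncomputable def matE (d : ℕ) : Mat d ≃ₗ[ℂ] EuclideanSpace ℂ (Fin d × Fin d) :=
  (LinearEquiv.curry ℂ ℂ (Fin d) (Fin d)).symm ≪≫ₗ (WithLp.linearEquiv 2 ℂ _).symm

lemma matE_apply {d : ℕ} (X : Mat d) (p : Fin d × Fin d) : matE d X p = X p.1 p.2 := rfl

lemma inner_matE {d : ℕ} (X Y : Mat d) :
    ⟪matE d X, matE d Y⟫_ℂ = Matrix.trace (Xᴴ * Y) := by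
  simp only [PiLp.inner_apply, matE_apply, RCLike.inner_apply, Matrix.trace, Matrix.diag,
    Matrix.mul_apply, Matrix.conjTranspose_apply]
  rw [Fintype.sum_prod_type, Finset.sum_comm]
  simp [mul_comm]

lemma parseval {ι H : Type*} [Fintype ι] [NormedAddCommGroup H] [InnerProductSpace ℂ H]
    (b : OrthonormalBasis ι ℂ H) (x : H) :
    ∑ i, (‖⟪b i, x⟫_ℂ‖ ^ 2 : ℂ) = (‖x‖ ^ 2 : ℝ) := by
  calc ∑ i, (‖⟪b i, x⟫_ℂ‖ ^ 2 : ℂ) = ∑ i, ⟪x, b i⟫_ℂ * ⟪b i, x⟫_ℂ := by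
        refine Finset.sum_congr rfl fun i _ => ?_
        rw [← inner_conj_symm x (b i), RCLike.conj_mul]
        norm_cast
    _ = ⟪x, x⟫_ℂ := b.sum_inner_mul_inner x x
    _ = (‖x‖ ^ 2 : ℝ) := by
        rw [inner_self_eq_norm_sq_to_K]
        norm_cast


lemma hs_step {ι κ H : Type*} [Fintype ι] [Fintype κ] [NormedAddCommGroup H]
    [InnerProductSpace ℂ H] [FiniteDimensional ℂ H]
    (b : OrthonormalBasis ι ℂ H) (c : OrthonormalBasis κ ℂ H) (T : H →ₗ[ℂ] H) :
    ∑ i, (‖T (b i)‖ ^ 2 : ℂ) = ∑ j, (‖(LinearMap.adjoint T) (c j)‖ ^ 2 : ℂ) := by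
  calc ∑ i, (‖T (b i)‖ ^ 2 : ℂ) = ∑ i, ∑ j, (‖⟪c j, T (b i)⟫_ℂ‖ ^ 2 : ℂ) := by
        refine Finset.sum_congr rfl fun i _ => ?_
        rw [parseval c]; norm_cast
    _ = ∑ j, ∑ i, (‖⟪b i, (LinearMap.adjoint T) (c j)⟫_ℂ‖ ^ 2 : ℂ) := by
        rw [Finset.sum_comm]
        refine Finset.sum_congr rfl fun j _ => Finset.sum_congr rfl fun i _ => ?_
        rw [← LinearMap.adjoint_inner_left, norm_inner_symm]
    _ = ∑ j, (‖(LinearMap.adjoint T) (c j)‖ ^ 2 : ℂ) := by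
        refine Finset.sum_congr rfl fun j _ => ?_
        rw [parseval b]; norm_cast

lemma hs_indep {ι κ H : Type*} [Fintype ι] [Fintype κ] [NormedAddCommGroup H]
    [InnerProductSpace ℂ H] [FiniteDimensional ℂ H]
    (b : OrthonormalBasis ι ℂ H) (c : OrthonormalBasis κ ℂ H) (T : H →ₗ[ℂ] H) :
    ∑ i, (‖T (b i)‖ ^ 2 : ℂ) = ∑ j, (‖T (c j)‖ ^ 2 : ℂ) := by
  rw [hs_step b c T, hs_step c c (LinearMap.adjoint T), LinearMap.adjoint_adjoint]

lemma matE_std {d : ℕ} (p : Fin d × Fin d) :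
    matE d (Matrix.single p.1 p.2 1) = EuclideanSpace.single p 1 := by
  ext q
  rw [matE_apply]
  simp [Matrix.single, EuclideanSpace.single_apply, Prod.ext_iff, and_comm, eq_comm]

noncomputable def bON {d : ℕ} (A : Fin (d ^ 2) → Mat d)
    (horth : ∀ k l : Fin (d ^ 2), Matrix.trace ((A k)ᴴ * A l) = if k = l then 1 else 0)
    (hspan : Submodule.span ℂ (Set.range A) = ⊤) :
    OrthonormalBasis (Fin (d ^ 2)) ℂ (EuclideanSpace ℂ (Fin d × Fin d)) :=
  OrthonormalBasis.mk (v := fun k => matE d (A k))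
    ((orthonormal_iff_ite (𝕜 := ℂ)).mpr fun k l => by rw [inner_matE]; exact horth k l)
    (by
      have : Set.range (fun k => matE d (A k)) = (matE d) '' (Set.range A) := by
        rw [← Set.range_comp]; rfl
      rw [this, ← LinearEquiv.coe_coe, ← Submodule.map_span, hspan, Submodule.map_top]
      exact fun x _ => LinearMap.mem_range.mpr ⟨(matE d).symm x, (matE d).apply_symm_apply x⟩)

lemma bON_apply {d : ℕ} (A : Fin (d ^ 2) → Mat d) (horth : ∀ k l : Fin (d ^ 2),
    Matrix.trace ((A k)ᴴ * A l) = if k = l then 1 else 0)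
    (hspan : Submodule.span ℂ (Set.range A) = ⊤) (k : Fin (d ^ 2)) :
    bON A horth hspan k = matE d (A k) := by
  simp [bON]


lemma trace_swap_mul {d : ℕ} (X : Mat2 d) :
    Matrix.trace (swap d * X) = ∑ p : Fin d × Fin d, X (p.2, p.1) p := by
  simp only [Matrix.trace, Matrix.diag, Matrix.mul_apply, _root_.swap, Matrix.of_apply]
  refine Finset.sum_congr rfl fun p _ => ?_
  rw [Finset.sum_eq_single ((p.2, p.1) : Fin d × Fin d)]
  · simp
  · rintro ⟨q1, q2⟩ _ hq
    simp only [ite_mul, one_mul, zero_mul, ite_eq_right_iff, and_imp]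
    intro h1 h2
    exact absurd (Prod.ext h2.symm h1.symm) hq
  · simp

lemma tensorMap_swap_apply {d : ℕ} (E : Mat d →ₗ[ℂ] Mat d) (P Q : Fin d × Fin d) :
    tensorMap E E (swap d) P Q = ∑ i : Fin d, ∑ j : Fin d,
      E (Matrix.single i j 1) P.1 Q.1 * E (Matrix.single j i 1) P.2 Q.2 := by
  simp only [tensorMap, LinearMap.coe_mk, AddHom.coe_mk, Matrix.of_apply, _root_.swap]
  refine Finset.sum_congr rfl fun i _ => Finset.sum_congr rfl fun j _ => ?_
  rw [Finset.sum_eq_single j]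
  · rw [Finset.sum_eq_single i]
    · simp
    · intro l _ hl
      simp [Ne.symm hl]
    · simp
  · intro k _ hk
    apply Finset.sum_eq_zero
    intro l _
    simp [hk]
  · simp

lemma lhs_eq {d : ℕ} (E : Mat d →ₗ[ℂ] Mat d) (hE : IsHermPreserving E) :
    Matrix.trace (swap d * tensorMap E E (swap d))
      = ∑ i : Fin d, ∑ j : Fin d,
          Matrix.trace ((E (Matrix.single i j 1))ᴴ * E (Matrix.single i j 1)) := by
  rw [trace_swap_mul]
  have key : ∀ p : Fin d × Fin d, tensorMap E E (swap d) (p.2, p.1) p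
      = ∑ i : Fin d, ∑ j : Fin d,
        E (Matrix.single i j 1) p.2 p.1
          * star (E (Matrix.single i j 1) p.2 p.1) := by
    intro p
    rw [tensorMap_swap_apply]
    refine Finset.sum_congr rfl fun i _ => Finset.sum_congr rfl fun j _ => ?_
    have h1 : E (Matrix.single j i 1) = (E (Matrix.single i j 1))ᴴ := by
      rw [← hE]
      congr 1
      ext a b
      simp [Matrix.single, Matrix.conjTranspose_apply, and_comm]
    rw [h1, Matrix.conjTranspose_apply]
  rw [Finset.sum_congr rfl fun p _ => key p]
  rw [Finset.sum_comm]
  refine Finset.sum_congr rfl fun i _ => ?_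
  rw [Finset.sum_comm]
  refine Finset.sum_congr rfl fun j _ => ?_
  simp only [Matrix.trace, Matrix.diag, Matrix.mul_apply, Matrix.conjTranspose_apply]
  rw [Fintype.sum_prod_type]
  refine Finset.sum_congr rfl fun a _ => Finset.sum_congr rfl fun b _ => ?_
  exact mul_comm _ _

end Aux

/-- For hermiticity-preserving `E`,
`Tr[S (E⊗E)(S)] = ∑_{k,l} |𝓔_{kl}|²`, the squared Frobenius norm of the Liouville
representation of `E`. -/
theorem statement_3 (d : ℕ) (hd : 2 ≤ d)
    (A : Fin (d ^ 2) → Mat d)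
    (horth : ∀ k l : Fin (d ^ 2), Matrix.trace ((A k)ᴴ * A l) = if k = l then 1 else 0)
    (hspan : Submodule.span ℂ (Set.range A) = ⊤)
    (E : Mat d →ₗ[ℂ] Mat d) (hE : IsHermPreserving E) :
    Matrix.trace (swap d * tensorMap E E (swap d))
      = ((∑ k : Fin (d ^ 2), ∑ l : Fin (d ^ 2), ‖Liou A E k l‖ ^ 2 : ℝ) : ℂ) := by
  classical
  set T : EuclideanSpace ℂ (Fin d × Fin d) →ₗ[ℂ] EuclideanSpace ℂ (Fin d × Fin d) :=
    (matE d).toLinearMap ∘ₗ E ∘ₗ (matE d).symm.toLinearMap with hT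
  set b := bON A horth hspan with hb
  have hTb : ∀ k, T (b k) = matE d (E (A k)) := by
    intro k
    rw [hb, bON_apply]
    simp [hT]
  have lhs2 : Matrix.trace (swap d * tensorMap E E (swap d))
      = ∑ p : Fin d × Fin d, (‖T (EuclideanSpace.basisFun (Fin d × Fin d) ℂ p)‖ ^ 2 : ℂ) := by
    rw [lhs_eq E hE, Fintype.sum_prod_type]
    refine Finset.sum_congr rfl fun i _ => Finset.sum_congr rfl fun j _ => ?_
    set p : Fin d × Fin d := (i, j) with hp
    have hTe : T (EuclideanSpace.basisFun (Fin d × Fin d) ℂ p)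
        = matE d (E (Matrix.single p.1 p.2 1)) := by
      simp only [hT, EuclideanSpace.basisFun_apply, LinearMap.coe_comp,
        LinearEquiv.coe_coe, Function.comp_apply]
      rw [← matE_std p, LinearEquiv.symm_apply_apply]
    rw [hTe, ← inner_matE, inner_self_eq_norm_sq_to_K]
    norm_cast
  rw [lhs2, hs_indep (EuclideanSpace.basisFun (Fin d × Fin d) ℂ) b T]
  push_cast
  rw [Finset.sum_comm]
  refine Finset.sum_congr rfl fun l _ => ?_
  have : ∀ k, Liou A E k l = ⟪b k, T (b l)⟫_ℂ := by
    intro k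
    rw [hTb, hb, bON_apply, inner_matE]
    rfl
  calc (‖T (b l)‖ ^ 2 : ℂ) = ∑ k, (‖⟪b k, T (b l)⟫_ℂ‖ ^ 2 : ℂ) := by
        rw [parseval b (T (b l))]; norm_cast
    _ = ∑ k, ((‖Liou A E k l‖ : ℂ) ^ 2) := by
        refine Finset.sum_congr rfl fun k _ => ?_
        rw [this k]
end

section
/- Let E : M_d(ℂ) → M_d(ℂ) be a hermiticity-preserving linear map, and let M(E) be the 2×2 matrix with entries M_{ij} = Tr[B_i† (E⊗E)(B_j)]. Then M_{11} = S(E)², M_{12} = ‖𝓔_sdl‖²/√(d²−1), M_{21} = ‖𝓔_n‖²/√(d²−1), and M_{22} = Tr(𝓔_u† 𝓔_u)/(d²−1) = u(E). -/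
open Matrix Kronecker ComplexOrder MeasureTheory

variable {d : ℕ}

lemma normSqC (z : ℂ) : ((‖z‖^2 : ℝ) : ℂ) = z * (starRingEnd ℂ) z := by
  rw [Complex.mul_conj]
  norm_cast
  rw [Complex.normSq_eq_norm_sq]

lemma one_eq_sum (d : ℕ) : (1 : Mat d) = ∑ i, Matrix.single i i (1:ℂ) := by
  ext a b
  simp only [Matrix.sum_apply, Matrix.single, Matrix.one_apply, Matrix.of_apply]
  by_cases h : a = b
  · subst h
    rw [if_pos rfl, Finset.sum_eq_single a]
    · simp
    · intro x _ hx; simp [hx]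
    · simp
  · rw [if_neg h, Finset.sum_eq_zero]
    intro x _
    simp only [ite_eq_right_iff, one_ne_zero, imp_false]
    rintro ⟨rfl, rfl⟩
    exact h rfl

lemma swap_conjTranspose (d : ℕ) : (swap d)ᴴ = swap d := by
  ext p q
  simp only [_root_.swap, Matrix.conjTranspose_apply, Matrix.of_apply]
  by_cases h : p.1 = q.2 ∧ p.2 = q.1
  · rw [if_pos ⟨h.2.symm, h.1.symm⟩, if_pos h, star_one]
  · rw [if_neg (fun g => h ⟨g.2.symm, g.1.symm⟩), if_neg h, star_zero]

lemma trace_swap_kron (A B : Mat d) : ((swap d) * (A ⊗ₖ B)).trace = (A * B).trace := by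
  simp only [Matrix.trace, Matrix.diag_apply, Matrix.mul_apply, _root_.swap, Matrix.of_apply,
    Matrix.kroneckerMap_apply]
  rw [Fintype.sum_prod_type]
  simp [Fintype.sum_prod_type, ite_and, ite_mul, zero_mul, Finset.sum_ite_eq,
    Finset.sum_ite_eq']
  exact Finset.sum_comm

lemma tensorMap_eq_sum (E F : Mat d →ₗ[ℂ] Mat d) (X : Mat2 d) :
    tensorMap E F X = ∑ i, ∑ j, ∑ k, ∑ l, X (i,k) (j,l) •
      (E (Matrix.single i j 1) ⊗ₖ F (Matrix.single k l 1)) := by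
  ext p q
  simp [tensorMap, Matrix.sum_apply, Matrix.kroneckerMap_apply, smul_eq_mul]

lemma trace_T (E F : Mat d →ₗ[ℂ] Mat d) (X : Mat2 d) :
    (tensorMap E F X).trace = ∑ i, ∑ j, ∑ k, ∑ l, X (i,k) (j,l) *
      ((E (Matrix.single i j 1)).trace * (F (Matrix.single k l 1)).trace) := by
  rw [tensorMap_eq_sum]
  simp [Matrix.trace_sum, Matrix.trace_smul, Matrix.trace_kronecker, smul_eq_mul]

lemma trace_swap_T (E F : Mat d →ₗ[ℂ] Mat d) (X : Mat2 d) :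
    (swap d * tensorMap E F X).trace = ∑ i, ∑ j, ∑ k, ∑ l, X (i,k) (j,l) *
      (E (Matrix.single i j 1) * F (Matrix.single k l 1)).trace := by
  rw [tensorMap_eq_sum]
  simp [Matrix.mul_sum, Matrix.mul_smul, Matrix.trace_sum, Matrix.trace_smul, trace_swap_kron,
    smul_eq_mul]

lemma map_one_eq_sum (E : Mat d →ₗ[ℂ] Mat d) :
    E 1 = ∑ i, E (Matrix.single i i 1) := by
  conv_lhs => rw [one_eq_sum d]
  rw [map_sum]

lemma sum_diag_collapse (f : Fin d → Fin d → Fin d → Fin d → ℂ) :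
    (∑ i, ∑ j, ∑ k, ∑ l, if i = j ∧ k = l then f i j k l else 0) = ∑ i, ∑ k, f i i k k := by
  refine Finset.sum_congr rfl fun i _ => ?_
  rw [Finset.sum_eq_single i]
  · refine Finset.sum_congr rfl fun k _ => ?_
    simp [Finset.sum_ite_eq]
  · intro j _ hj
    refine Finset.sum_eq_zero fun k _ => Finset.sum_eq_zero fun l _ => ?_
    simp [Ne.symm hj]
  · simp

lemma sum_swap_collapse (f : Fin d → Fin d → Fin d → Fin d → ℂ) :
    (∑ i, ∑ j, ∑ k, ∑ l, if i = l ∧ k = j then f i j k l else 0) = ∑ i, ∑ j, f i j j i := by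
  refine Finset.sum_congr rfl fun i _ => Finset.sum_congr rfl fun j _ => ?_
  rw [Finset.sum_eq_single j]
  · simp [Finset.sum_ite_eq]
  · intro k _ hk
    refine Finset.sum_eq_zero fun l _ => ?_
    simp [hk]
  · simp

lemma tr_T_one (E : Mat d →ₗ[ℂ] Mat d) :
    (tensorMap E E 1).trace = (E 1).trace * (E 1).trace := by
  rw [trace_T]
  simp only [Matrix.one_apply, Prod.mk.injEq, ite_mul, zero_mul, one_mul]
  rw [sum_diag_collapse, map_one_eq_sum, Matrix.trace_sum, Finset.sum_mul_sum]

lemma tr_swap_T_one (E : Mat d →ₗ[ℂ] Mat d) :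
    (swap d * tensorMap E E 1).trace = (E 1 * E 1).trace := by
  rw [trace_swap_T]
  simp only [Matrix.one_apply, Prod.mk.injEq, ite_mul, zero_mul, one_mul]
  rw [sum_diag_collapse, map_one_eq_sum, Matrix.sum_mul, Matrix.trace_sum]
  congr 1; ext i
  rw [Matrix.mul_sum, Matrix.trace_sum]

lemma tr_T_swap (E : Mat d →ₗ[ℂ] Mat d) :
    (tensorMap E E (swap d)).trace = ∑ i, ∑ j,
      (E (Matrix.single i j 1)).trace * (E (Matrix.single j i 1)).trace := by
  rw [trace_T]
  simp only [_root_.swap, Matrix.of_apply, ite_mul, zero_mul, one_mul]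
  rw [sum_swap_collapse]

lemma tr_swap_T_swap (E : Mat d →ₗ[ℂ] Mat d) :
    (swap d * tensorMap E E (swap d)).trace = ∑ i, ∑ j,
      (E (Matrix.single i j 1) * E (Matrix.single j i 1)).trace := by
  rw [trace_swap_T]
  simp only [_root_.swap, Matrix.of_apply, ite_mul, zero_mul, one_mul]
  rw [sum_swap_collapse]

lemma stdBasis_cT (a b : Fin d) :
    (Matrix.single a b (1:ℂ))ᴴ = Matrix.single b a 1 := by
  ext i j
  simp only [Matrix.conjTranspose_apply, Matrix.single, Matrix.of_apply]
  by_cases h : b = i ∧ a = j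
  · rw [if_pos ⟨h.2, h.1⟩, if_pos h, star_one]
  · rw [if_neg (fun g => h ⟨g.2, g.1⟩), if_neg h, star_zero]

lemma trace_cT_mul (C X : Mat d) :
    (Cᴴ * X).trace = ∑ a, ∑ b, (starRingEnd ℂ) (C a b) * X a b := by
  simp only [Matrix.trace, Matrix.diag_apply, Matrix.mul_apply, Matrix.conjTranspose_apply]
  rw [Finset.sum_comm]
  rfl

lemma entry_expand (E : Mat d →ₗ[ℂ] Mat d) (X : Mat d) (p q : Fin d) :
    E X p q = ∑ a, ∑ b, X a b * E (Matrix.single a b 1) p q := by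
  conv_lhs => rw [Matrix.matrix_eq_sum_single X]
  rw [map_sum, Matrix.sum_apply]
  refine Finset.sum_congr rfl fun a _ => ?_
  rw [map_sum, Matrix.sum_apply]
  refine Finset.sum_congr rfl fun b _ => ?_
  rw [show Matrix.single a b (X a b) = X a b • Matrix.single a b 1 by
    rw [Matrix.smul_single, smul_eq_mul, mul_one], _root_.map_smul]
  simp

lemma φ_expand (E : Mat d →ₗ[ℂ] Mat d) (X : Mat d) :
    (E X).trace = ∑ a, ∑ b, X a b * (E (Matrix.single a b 1)).trace := by
  rw [Matrix.trace]
  simp only [Matrix.diag_apply]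
  rw [Finset.sum_congr rfl fun p _ => entry_expand E X p p, Finset.sum_comm]
  refine Finset.sum_congr rfl fun a _ => ?_
  rw [Finset.sum_comm]
  refine Finset.sum_congr rfl fun b _ => ?_
  rw [Matrix.trace, ← Finset.mul_sum]
  rfl

lemma completeness (A : Fin (d ^ 2) → Mat d)
    (horth : ∀ k l : Fin (d ^ 2), Matrix.trace ((A k)ᴴ * A l) = if k = l then 1 else 0)
    (hspan : Submodule.span ℂ (Set.range A) = ⊤) (X : Mat d) :
    ∑ k, Matrix.trace ((A k)ᴴ * X) • A k = X := by
  let P : Mat d →ₗ[ℂ] Mat d :=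
    { toFun := fun X => ∑ k, Matrix.trace ((A k)ᴴ * X) • A k
      map_add' := by
        intro X Y
        simp [Matrix.mul_add, Matrix.trace_add, add_smul, Finset.sum_add_distrib]
      map_smul' := by
        intro c X
        simp [Matrix.mul_smul, Matrix.trace_smul, smul_smul, Finset.smul_sum] }
  have hP : P = LinearMap.id := by
    apply LinearMap.ext_on hspan
    rintro x ⟨l, rfl⟩
    show ∑ k, Matrix.trace ((A k)ᴴ * A l) • A k = A l
    simp only [horth, ite_smul, one_smul, zero_smul]
    rw [Finset.sum_ite_eq' Finset.univ l A]
    simp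
  exact LinearMap.congr_fun hP X

lemma parseval_k (A : Fin (d ^ 2) → Mat d)
    (horth : ∀ k l : Fin (d ^ 2), Matrix.trace ((A k)ᴴ * A l) = if k = l then 1 else 0)
    (hspan : Submodule.span ℂ (Set.range A) = ⊤) (X Y : Mat d) :
    ∑ k, Matrix.trace ((A k)ᴴ * X) * Matrix.trace (Y * A k) = Matrix.trace (Y * X) := by
  conv_rhs => rw [← completeness A horth hspan X]
  rw [Matrix.mul_sum, Matrix.trace_sum]
  refine Finset.sum_congr rfl fun k _ => ?_
  rw [Matrix.mul_smul, Matrix.trace_smul, smul_eq_mul]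

lemma master (A : Fin (d ^ 2) → Mat d)
    (horth : ∀ k l : Fin (d ^ 2), Matrix.trace ((A k)ᴴ * A l) = if k = l then 1 else 0)
    (hspan : Submodule.span ℂ (Set.range A) = ⊤) (C : Mat d) :
    ∑ l, Matrix.trace (Cᴴ * A l) * (starRingEnd ℂ) (Matrix.trace (Cᴴ * A l))
      = Matrix.trace (Cᴴ * C) := by
  have hc : ∀ l, (starRingEnd ℂ) (Matrix.trace (Cᴴ * A l)) = Matrix.trace ((A l)ᴴ * C) := by
    intro l
    rw [show (starRingEnd ℂ) (Cᴴ * A l).trace = star (Cᴴ * A l).trace from rfl,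
      ← Matrix.trace_conjTranspose, Matrix.conjTranspose_mul, Matrix.conjTranspose_conjTranspose]
  calc ∑ l, Matrix.trace (Cᴴ * A l) * (starRingEnd ℂ) (Matrix.trace (Cᴴ * A l))
      = ∑ l, Matrix.trace ((A l)ᴴ * C) * Matrix.trace (Cᴴ * A l) := by
        refine Finset.sum_congr rfl fun l _ => ?_
        rw [hc, mul_comm]
    _ = Matrix.trace (Cᴴ * C) := parseval_k A horth hspan C Cᴴ

lemma sum4_comm (f : Fin d → Fin d → Fin d → Fin d → ℂ) :
    ∑ p, ∑ q, ∑ a, ∑ b, f p q a b = ∑ a, ∑ b, ∑ p, ∑ q, f p q a b := by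
  calc ∑ p, ∑ q, ∑ a, ∑ b, f p q a b
      = ∑ p, ∑ a, ∑ q, ∑ b, f p q a b :=
        Finset.sum_congr rfl fun p _ => Finset.sum_comm
    _ = ∑ a, ∑ p, ∑ q, ∑ b, f p q a b := Finset.sum_comm
    _ = ∑ a, ∑ p, ∑ b, ∑ q, f p q a b :=
        Finset.sum_congr rfl fun a _ => Finset.sum_congr rfl fun p _ => Finset.sum_comm
    _ = ∑ a, ∑ b, ∑ p, ∑ q, f p q a b :=
        Finset.sum_congr rfl fun a _ => Finset.sum_comm

lemma conj_trace_E (E : Mat d →ₗ[ℂ] Mat d) (hE : ∀ X : Mat d, E Xᴴ = (E X)ᴴ) (X : Mat d) :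
    (starRingEnd ℂ) ((E X).trace) = (E Xᴴ).trace := by
  rw [hE, Matrix.trace_conjTranspose]
  rfl

lemma L3 (A : Fin (d ^ 2) → Mat d)
    (horth : ∀ k l : Fin (d ^ 2), Matrix.trace ((A k)ᴴ * A l) = if k = l then 1 else 0)
    (hspan : Submodule.span ℂ (Set.range A) = ⊤)
    (E : Mat d →ₗ[ℂ] Mat d) (hE : ∀ X : Mat d, E Xᴴ = (E X)ᴴ) :
    ∑ l, (E (A l)).trace * (starRingEnd ℂ) ((E (A l)).trace)
      = ∑ i, ∑ j, (E (Matrix.single i j 1)).trace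
          * (E (Matrix.single j i 1)).trace := by
  set C : Mat d := Matrix.of fun a b => (starRingEnd ℂ) ((E (Matrix.single a b 1)).trace)
    with hC
  have hCX : ∀ X : Mat d, (Cᴴ * X).trace = (E X).trace := by
    intro X
    rw [trace_cT_mul, φ_expand]
    refine Finset.sum_congr rfl fun a _ => Finset.sum_congr rfl fun b _ => ?_
    rw [hC]
    simp only [Matrix.of_apply, RingHom.id_apply, RingHomCompTriple.comp_apply,
      Complex.conj_conj]
    ring
  calc ∑ l, (E (A l)).trace * (starRingEnd ℂ) ((E (A l)).trace)
      = ∑ l, (Cᴴ * A l).trace * (starRingEnd ℂ) ((Cᴴ * A l).trace) := by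
        refine Finset.sum_congr rfl fun l _ => ?_
        rw [hCX]
    _ = (Cᴴ * C).trace := master A horth hspan C
    _ = ∑ a, ∑ b, (starRingEnd ℂ) (C a b) * C a b := trace_cT_mul C C
    _ = _ := by
        refine Finset.sum_congr rfl fun a _ => Finset.sum_congr rfl fun b _ => ?_
        rw [hC]
        simp only [Matrix.of_apply, Complex.conj_conj]
        rw [conj_trace_E E hE, stdBasis_cT]

lemma L4 (A : Fin (d ^ 2) → Mat d)
    (horth : ∀ k l : Fin (d ^ 2), Matrix.trace ((A k)ᴴ * A l) = if k = l then 1 else 0)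
    (hspan : Submodule.span ℂ (Set.range A) = ⊤)
    (E : Mat d →ₗ[ℂ] Mat d) (hE : ∀ X : Mat d, E Xᴴ = (E X)ᴴ) :
    ∑ l, (E ((A l)ᴴ) * E (A l)).trace
      = ∑ i, ∑ j, (E (Matrix.single i j 1) * E (Matrix.single j i 1)).trace := by
  have key : ∀ p q : Fin d,
      ∑ l, (starRingEnd ℂ) (E (A l) p q) * E (A l) p q
        = ∑ a, ∑ b, (starRingEnd ℂ) (E (Matrix.single a b 1) p q)
            * E (Matrix.single a b 1) p q := by
    intro p q
    set C : Mat d := Matrix.of fun a b => (starRingEnd ℂ) (E (Matrix.single a b 1) p q)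
      with hC
    have hCX : ∀ X : Mat d, (Cᴴ * X).trace = E X p q := by
      intro X
      rw [trace_cT_mul, entry_expand E X p q]
      refine Finset.sum_congr rfl fun a _ => Finset.sum_congr rfl fun b _ => ?_
      rw [hC]
      simp only [Matrix.of_apply, Complex.conj_conj]
      ring
    calc ∑ l, (starRingEnd ℂ) (E (A l) p q) * E (A l) p q
        = ∑ l, (Cᴴ * A l).trace * (starRingEnd ℂ) ((Cᴴ * A l).trace) := by
          refine Finset.sum_congr rfl fun l _ => ?_
          rw [hCX, mul_comm]
      _ = (Cᴴ * C).trace := master A horth hspan C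
      _ = ∑ a, ∑ b, (starRingEnd ℂ) (C a b) * C a b := trace_cT_mul C C
      _ = _ := by
          refine Finset.sum_congr rfl fun a _ => Finset.sum_congr rfl fun b _ => ?_
          rw [hC]
          simp only [Matrix.of_apply, Complex.conj_conj]
          ring
  calc ∑ l, (E ((A l)ᴴ) * E (A l)).trace
      = ∑ l, ∑ p, ∑ q, (starRingEnd ℂ) (E (A l) p q) * E (A l) p q := by
        refine Finset.sum_congr rfl fun l _ => ?_
        rw [hE, trace_cT_mul]
    _ = ∑ p, ∑ q, ∑ l, (starRingEnd ℂ) (E (A l) p q) * E (A l) p q := by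
        rw [Finset.sum_comm]
        exact Finset.sum_congr rfl fun p _ => Finset.sum_comm
    _ = ∑ p, ∑ q, ∑ a, ∑ b, (starRingEnd ℂ) (E (Matrix.single a b 1) p q)
          * E (Matrix.single a b 1) p q := by
        exact Finset.sum_congr rfl fun p _ => Finset.sum_congr rfl fun q _ => key p q
    _ = ∑ a, ∑ b, ∑ p, ∑ q, (starRingEnd ℂ) (E (Matrix.single a b 1) p q)
          * E (Matrix.single a b 1) p q :=
        sum4_comm _
    _ = ∑ a, ∑ b, (E (Matrix.single b a 1) * E (Matrix.single a b 1)).trace := by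
        refine Finset.sum_congr rfl fun a _ => Finset.sum_congr rfl fun b _ => ?_
        rw [← trace_cT_mul, ← hE, stdBasis_cT]
    _ = _ := by
        rw [Finset.sum_comm]

/-- The entries of the 2×2 matrix `M(E)`:
`M₁₁ = S(E)²`, `M₁₂ = ‖𝓔_sdl‖²/√(d²−1)`, `M₂₁ = ‖𝓔ₙ‖²/√(d²−1)`, `M₂₂ = u(E)`. -/
theorem statement_5 (d : ℕ) (hd : 2 ≤ d)
    (A : Fin (d ^ 2) → Mat d)
    (horth : ∀ k l : Fin (d ^ 2), Matrix.trace ((A k)ᴴ * A l) = if k = l then 1 else 0)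
    (hspan : Submodule.span ℂ (Set.range A) = ⊤)
    (hA0 : ∀ k : Fin (d ^ 2), (k : ℕ) = 0 → A k = ((Real.sqrt d : ℝ) : ℂ)⁻¹ • 1)
    (E : Mat d →ₗ[ℂ] Mat d) (hE : IsHermPreserving E) :
    Mmat E 0 0 = (Matrix.trace (E 1) / (d : ℂ)) ^ 2 ∧
    Mmat E 0 1 = ((sdlSq A E : ℝ) : ℂ) / ((Real.sqrt ((d : ℝ) ^ 2 - 1) : ℝ) : ℂ) ∧
    Mmat E 1 0 = ((nSq A E : ℝ) : ℂ) / ((Real.sqrt ((d : ℝ) ^ 2 - 1) : ℝ) : ℂ) ∧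
    Mmat E 1 1 = ((unitarity A E : ℝ) : ℂ) := by
  classical
  have hd0 : 0 < d := by omega
  have hd2 : 0 < d ^ 2 := by positivity
  have hE' : ∀ X : Mat d, E Xᴴ = (E X)ᴴ := hE
  set k0 : Fin (d ^ 2) := ⟨0, hd2⟩ with hk0
  set r : ℂ := ((Real.sqrt d : ℝ) : ℂ)⁻¹ with hr
  have hrs : star r = r := by
    rw [hr, show star (((Real.sqrt d : ℝ) : ℂ))⁻¹ = (starRingEnd ℂ) (((Real.sqrt d : ℝ) : ℂ))⁻¹
      from rfl, map_inv₀, Complex.conj_ofReal]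
  have hrr : r * r = ((d : ℂ))⁻¹ := by
    rw [hr, ← mul_inv]
    congr 1
    rw [← Complex.ofReal_mul, Real.mul_self_sqrt (by positivity)]
    push_cast
    ring
  set t1 : ℂ := (E 1).trace with ht1
  set t2 : ℂ := (E 1 * E 1).trace with ht2
  set S3 : ℂ := ∑ i, ∑ j, (E (Matrix.single i j 1)).trace
      * (E (Matrix.single j i 1)).trace with hS3
  set S4 : ℂ := ∑ i, ∑ j, (E (Matrix.single i j 1)
      * E (Matrix.single j i 1)).trace with hS4
  set s : ℂ := ((Real.sqrt ((d : ℝ) ^ 2 - 1) : ℝ) : ℂ) with hs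
  have hd2R : (0:ℝ) ≤ (d:ℝ)^2 - 1 := by
    have h2d : (2:ℝ) ≤ (d:ℝ) := by exact_mod_cast hd
    nlinarith
  have hss : s * s = (d:ℂ)^2 - 1 := by
    rw [hs, ← Complex.ofReal_mul, Real.mul_self_sqrt hd2R]
    push_cast
    ring
  have hsstar : star s⁻¹ = s⁻¹ := by
    rw [show star s⁻¹ = (starRingEnd ℂ) s⁻¹ from rfl, map_inv₀, hs, Complex.conj_ofReal]
  have hE1H : (E 1)ᴴ = E 1 := by rw [← hE' 1, Matrix.conjTranspose_one]
  have hconjt1 : (starRingEnd ℂ) t1 = t1 := by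
    rw [ht1, conj_trace_E E hE' 1, Matrix.conjTranspose_one]
  have hA00 : A k0 = r • 1 := hA0 k0 rfl
  have hL0l : ∀ l, Liou A E k0 l = r * (E (A l)).trace := by
    intro l
    show Matrix.trace ((A k0)ᴴ * E (A l)) = _
    rw [hA00, Matrix.conjTranspose_smul, Matrix.conjTranspose_one, smul_mul_assoc, one_mul,
      Matrix.trace_smul, hrs, smul_eq_mul]
  have hLk0 : ∀ k, Liou A E k k0 = r * ((A k)ᴴ * E 1).trace := by
    intro k
    show Matrix.trace ((A k)ᴴ * E (A k0)) = _
    rw [hA00, _root_.map_smul, mul_smul_comm, Matrix.trace_smul, smul_eq_mul]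
  have hdiag : Liou A E k0 k0 = r * (r * t1) := by
    rw [hL0l k0, hA00, _root_.map_smul, Matrix.trace_smul, smul_eq_mul, ht1]
  have hdiagv : Liou A E k0 k0 * (starRingEnd ℂ) (Liou A E k0 k0)
      = ((d:ℂ)⁻¹ * t1) * ((d:ℂ)⁻¹ * t1) := by
    rw [hdiag, _root_.map_mul, _root_.map_mul, hconjt1, show (starRingEnd ℂ) r = star r from rfl, hrs, ← hrr]
    ring
  have hconjk : ∀ k, (starRingEnd ℂ) (((A k)ᴴ * E 1).trace) = (E 1 * A k).trace := by
    intro k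
    rw [show (starRingEnd ℂ) (((A k)ᴴ * E 1).trace) = star (((A k)ᴴ * E 1).trace) from rfl,
      ← Matrix.trace_conjTranspose, Matrix.conjTranspose_mul, Matrix.conjTranspose_conjTranspose,
      hE1H]
  have hrow : ∑ l, Liou A E k0 l * (starRingEnd ℂ) (Liou A E k0 l) = (d:ℂ)⁻¹ * S3 := by
    have h1 : ∀ l, Liou A E k0 l * (starRingEnd ℂ) (Liou A E k0 l)
        = (d:ℂ)⁻¹ * ((E (A l)).trace * (starRingEnd ℂ) ((E (A l)).trace)) := by
      intro l
      rw [hL0l l, _root_.map_mul, show (starRingEnd ℂ) r = star r from rfl, hrs, ← hrr]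
      ring
    rw [Finset.sum_congr rfl fun l _ => h1 l, ← Finset.mul_sum, L3 A horth hspan E hE', hS3]
  have hcol : ∑ k, Liou A E k k0 * (starRingEnd ℂ) (Liou A E k k0) = (d:ℂ)⁻¹ * t2 := by
    have h1 : ∀ k, Liou A E k k0 * (starRingEnd ℂ) (Liou A E k k0)
        = (d:ℂ)⁻¹ * (((A k)ᴴ * E 1).trace * ((E 1) * A k).trace) := by
      intro k
      rw [hLk0 k, _root_.map_mul, show (starRingEnd ℂ) r = star r from rfl, hrs, hconjk k, ← hrr]
      ring
    rw [Finset.sum_congr rfl fun k _ => h1 k, ← Finset.mul_sum,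
      parseval_k A horth hspan (E 1) (E 1), ht2]
  have hfull : ∑ l, ∑ k, Liou A E k l * (starRingEnd ℂ) (Liou A E k l) = S4 := by
    have h1 : ∀ l, ∑ k, Liou A E k l * (starRingEnd ℂ) (Liou A E k l)
        = (E ((A l)ᴴ) * E (A l)).trace := by
      intro l
      have h2 : ∀ k, (starRingEnd ℂ) (Liou A E k l) = (E ((A l)ᴴ) * A k).trace := by
        intro k
        rw [show (starRingEnd ℂ) (Liou A E k l) = star (((A k)ᴴ * E (A l)).trace) from rfl,
          ← Matrix.trace_conjTranspose, Matrix.conjTranspose_mul,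
          Matrix.conjTranspose_conjTranspose, ← hE' (A l)]
      calc ∑ k, Liou A E k l * (starRingEnd ℂ) (Liou A E k l)
          = ∑ k, ((A k)ᴴ * E (A l)).trace * ((E ((A l)ᴴ)) * A k).trace :=
            Finset.sum_congr rfl fun k _ => by rw [h2 k]; rfl
        _ = _ := parseval_k A horth hspan (E (A l)) (E ((A l)ᴴ))
    rw [Finset.sum_congr rfl fun l _ => h1 l, hS4]
    exact L4 A horth hspan E hE'
  have hf0 : (Finset.univ.filter fun k : Fin (d^2) => (k:ℕ) = 0) = {k0} := by
    ext k
    simp only [Finset.mem_filter, Finset.mem_univ, true_and, Finset.mem_singleton]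
    exact ⟨fun h => Fin.ext h, fun h => by rw [h]⟩
  have hfne : (Finset.univ.filter fun k : Fin (d^2) => (k:ℕ) ≠ 0) = Finset.univ.erase k0 := by
    ext k
    simp only [Finset.mem_filter, Finset.mem_univ, true_and, Finset.mem_erase, and_true]
    exact not_congr ⟨fun h => Fin.ext h, fun h => by rw [h]⟩
  have hcast : ∀ (f : Fin (d^2) → ℂ),
      ((∑ x, ‖f x‖^2 : ℝ) : ℂ) = ∑ x, f x * (starRingEnd ℂ) (f x) := by
    intro f
    rw [Complex.ofReal_sum]
    exact Finset.sum_congr rfl fun x _ => normSqC (f x)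
  -- the three real block norms, as complex numbers
  have hsdl : ((sdlSq A E : ℝ) : ℂ)
      = (d:ℂ)⁻¹ * S3 - ((d:ℂ)⁻¹ * t1) * ((d:ℂ)⁻¹ * t1) := by
    rw [sdlSq, hf0, hfne, Finset.sum_singleton,
      Finset.sum_erase_eq_sub (Finset.mem_univ k0), Complex.ofReal_sub,
      hcast fun l => Liou A E k0 l, hrow, normSqC, hdiagv]
  have hn : ((nSq A E : ℝ) : ℂ)
      = (d:ℂ)⁻¹ * t2 - ((d:ℂ)⁻¹ * t1) * ((d:ℂ)⁻¹ * t1) := by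
    rw [nSq, hf0, hfne]
    simp only [Finset.sum_singleton]
    rw [Finset.sum_erase_eq_sub (Finset.mem_univ k0), Complex.ofReal_sub,
      hcast fun k => Liou A E k k0, hcol, normSqC, hdiagv]
  have hdouble : ((∑ k, ∑ l, ‖Liou A E k l‖^2 : ℝ) : ℂ) = S4 := by
    rw [Complex.ofReal_sum, Finset.sum_congr rfl fun k _ => hcast fun l => Liou A E k l,
      Finset.sum_comm]
    exact hfull
  have hnumR : ∑ k ∈ Finset.univ.erase k0, ∑ l ∈ Finset.univ.erase k0, ‖Liou A E k l‖^2
      = ((∑ k, ∑ l, ‖Liou A E k l‖^2) - (∑ l, ‖Liou A E k0 l‖^2))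
        - ((∑ k, ‖Liou A E k k0‖^2) - ‖Liou A E k0 k0‖^2) := by
    rw [Finset.sum_congr rfl fun k _ => Finset.sum_erase_eq_sub (Finset.mem_univ k0),
      Finset.sum_sub_distrib, Finset.sum_erase_eq_sub (Finset.mem_univ k0),
      Finset.sum_erase_eq_sub (Finset.mem_univ k0)]
  have hu : ((unitarity A E : ℝ) : ℂ)
      = (S4 - (d:ℂ)⁻¹ * S3 - ((d:ℂ)⁻¹ * t2 - ((d:ℂ)⁻¹ * t1) * ((d:ℂ)⁻¹ * t1)))
        / ((d:ℂ)^2 - 1) := by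
    rw [unitarity, hfne, Complex.ofReal_div]
    congr 1
    · rw [hnumR, Complex.ofReal_sub, Complex.ofReal_sub, Complex.ofReal_sub, hdouble,
        hcast fun l => Liou A E k0 l, hrow, hcast fun k => Liou A E k k0, hcol, normSqC, hdiagv]
    · push_cast
      ring
  -- Mmat entries
  have hTB1 : tensorMap E E (B1 d) = (d:ℂ)⁻¹ • tensorMap E E 1 := by rw [B1, _root_.map_smul]
  have hTB2 : tensorMap E E (B2 d)
      = s⁻¹ • (tensorMap E E (swap d) - (d:ℂ)⁻¹ • tensorMap E E 1) := by
    rw [B2, _root_.map_smul, _root_.map_sub, _root_.map_smul, ← hs]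
  have hB1H : (B1 d)ᴴ = (d:ℂ)⁻¹ • (1 : Mat2 d) := by
    rw [B1, Matrix.conjTranspose_smul, Matrix.conjTranspose_one]
    congr 1
    simp
  have hB2H : (B2 d)ᴴ = s⁻¹ • (swap d - (d:ℂ)⁻¹ • (1 : Mat2 d)) := by
    rw [B2, Matrix.conjTranspose_smul, Matrix.conjTranspose_sub, Matrix.conjTranspose_smul,
      Matrix.conjTranspose_one, swap_conjTranspose, ← hs, hsstar]
    congr 2
    simp
  have hM00 : Mmat E 0 0 = (d:ℂ)⁻¹ * ((d:ℂ)⁻¹ * (t1 * t1)) := by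
    simp only [Mmat, Matrix.of_apply, Matrix.cons_val_zero]
    rw [hB1H, hTB1]
    simp only [Matrix.smul_mul, Matrix.mul_smul, one_mul, Matrix.trace_smul, smul_eq_mul,
      tr_T_one, ht1]
  have hM01 : Mmat E 0 1 = (d:ℂ)⁻¹ * (s⁻¹ * (S3 - (d:ℂ)⁻¹ * (t1 * t1))) := by
    simp only [Mmat, Matrix.of_apply, Matrix.cons_val_zero, Matrix.cons_val_one,
      Matrix.head_cons]
    rw [hB1H, hTB2]
    simp only [Matrix.smul_mul, Matrix.mul_smul, Matrix.mul_sub, Matrix.sub_mul, one_mul,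
      Matrix.trace_smul, Matrix.trace_sub, smul_eq_mul, tr_T_one, tr_T_swap, ht1, hS3]
    ring
  have hM10 : Mmat E 1 0 = s⁻¹ * ((d:ℂ)⁻¹ * (t2 - (d:ℂ)⁻¹ * (t1 * t1))) := by
    simp only [Mmat, Matrix.of_apply, Matrix.cons_val_zero, Matrix.cons_val_one,
      Matrix.head_cons]
    rw [hB2H, hTB1]
    simp only [Matrix.smul_mul, Matrix.mul_smul, Matrix.mul_sub, Matrix.sub_mul, one_mul,
      Matrix.mul_one, Matrix.trace_smul, Matrix.trace_sub, smul_eq_mul, tr_T_one,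
      tr_swap_T_one, ht1, ht2]
    ring
  have hM11 : Mmat E 1 1
      = s⁻¹ * (s⁻¹ * (S4 - (d:ℂ)⁻¹ * t2 - (d:ℂ)⁻¹ * S3 + (d:ℂ)⁻¹ * ((d:ℂ)⁻¹ * (t1 * t1)))) := by
    simp only [Mmat, Matrix.of_apply, Matrix.cons_val_one, Matrix.head_cons, Matrix.cons_val_zero]
    rw [hB2H, hTB2]
    simp only [Matrix.smul_mul, Matrix.mul_smul, Matrix.mul_sub, Matrix.sub_mul, one_mul,
      Matrix.mul_one, Matrix.trace_smul, Matrix.trace_sub, smul_eq_mul, tr_T_one,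
      tr_swap_T_one, tr_T_swap, tr_swap_T_swap, ht1, ht2, hS3, hS4]
    ring
  refine ⟨?_, ?_, ?_, ?_⟩
  · rw [hM00]
    ring
  · rw [hM01, hsdl]
    ring
  · rw [hM10, hn]
    ring
  · rw [hM11, hu, ← hss, div_eq_mul_inv, mul_inv]
    ring
end

section
/- Let E : M_d(ℂ) → M_d(ℂ) be completely positive and trace-preserving. Then ‖𝓔_n‖² ≤ (d−1)(1 − u(E)). -/
open Matrix Kronecker ComplexOrder MeasureTheory

variable {d : ℕ}

namespace Stmt10

lemma normsq_re (z : ℂ) : ((starRingEnd ℂ) z * z).re = ‖z‖^2 := by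
  rw [mul_comm, Complex.mul_conj, ← Complex.sq_norm,
    Complex.ofReal_re]

lemma star_trace_conjTranspose_mul {m n : Type*} [Fintype m] [Fintype n]
    (X Y : Matrix m n ℂ) :
    (starRingEnd ℂ) (Matrix.trace (Xᴴ * Y)) = Matrix.trace (Yᴴ * X) := by
  have : (Xᴴ * Y)ᴴ = Yᴴ * X := by rw [Matrix.conjTranspose_mul, Matrix.conjTranspose_conjTranspose]
  rw [← this, Matrix.trace_conjTranspose]
  rfl

lemma trace_conjTranspose_mul_eq_sum {m n : Type*} [Fintype m] [Fintype n]
    (X Y : Matrix m n ℂ) :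
    Matrix.trace (Xᴴ * Y) = ∑ j, ∑ i, (starRingEnd ℂ) (X i j) * Y i j := by
  simp [Matrix.trace, Matrix.mul_apply, Matrix.diag, Matrix.conjTranspose_apply]

lemma frob {m n : Type*} [Fintype m] [Fintype n] (Z : Matrix m n ℂ) :
    (Matrix.trace (Zᴴ * Z)).re = ∑ j, ∑ i, ‖Z i j‖^2 := by
  rw [trace_conjTranspose_mul_eq_sum, Complex.re_sum]
  refine Finset.sum_congr rfl fun j _ => ?_
  rw [Complex.re_sum]
  exact Finset.sum_congr rfl fun i _ => normsq_re _

lemma frob_nonneg {m n : Type*} [Fintype m] [Fintype n] (Z : Matrix m n ℂ) :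
    0 ≤ (Matrix.trace (Zᴴ * Z)).re := by
  rw [frob]
  positivity

section parseval
variable {N : ℕ} (A : Fin N → Mat d)
  (horth : ∀ k l : Fin N, Matrix.trace ((A k)ᴴ * A l) = if k = l then 1 else 0)
  (hspan : Submodule.span ℂ (Set.range A) = ⊤)

include horth hspan in
lemma parseval (X Y : Mat d) :
    Matrix.trace (Xᴴ * Y) = ∑ k, Matrix.trace (Xᴴ * A k) * Matrix.trace ((A k)ᴴ * Y) := by
  let φ : Mat d →ₗ[ℂ] ℂ :=
    { toFun := fun Y => Matrix.trace (Xᴴ * Y)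
      map_add' := fun a b => by simp only [Matrix.mul_add, Matrix.trace_add]
      map_smul' := fun c a => by simp only [Matrix.mul_smul, Matrix.trace_smul]; rfl }
  let ψ : Mat d →ₗ[ℂ] ℂ :=
    { toFun := fun Y => ∑ k, Matrix.trace (Xᴴ * A k) * Matrix.trace ((A k)ᴴ * Y)
      map_add' := fun a b => by
        simp only [Matrix.mul_add, Matrix.trace_add, mul_add]
        rw [Finset.sum_add_distrib]
      map_smul' := fun c a => by
        simp only [Matrix.mul_smul, Matrix.trace_smul, smul_eq_mul, RingHom.id_apply,
          Finset.mul_sum]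
        refine Finset.sum_congr rfl fun k _ => ?_
        ring }
  have : φ = ψ := by
    apply LinearMap.ext_on hspan
    rintro x ⟨l, rfl⟩
    show Matrix.trace (Xᴴ * A l) = ∑ k, Matrix.trace (Xᴴ * A k) * Matrix.trace ((A k)ᴴ * A l)
    simp only [horth, mul_ite, mul_one, mul_zero]
    rw [Finset.sum_ite_eq' Finset.univ l (fun k => Matrix.trace (Xᴴ * A k))]
    simp
  exact LinearMap.congr_fun this Y

include horth hspan in
lemma parseval_norm (X : Mat d) :
    ∑ k, ‖Matrix.trace ((A k)ᴴ * X)‖^2 = (Matrix.trace (Xᴴ * X)).re := by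
  rw [parseval A horth hspan X X, Complex.re_sum]
  refine (Finset.sum_congr rfl fun k _ => ?_).symm
  rw [← star_trace_conjTranspose_mul (A k) X, normsq_re]

end parseval



lemma swap_mul (M : Mat2 d) (p q : Fin d × Fin d) :
    (swap d * M) p q = M (p.2, p.1) q := by
  rw [Matrix.mul_apply, Finset.sum_eq_single ((p.2, p.1) : Fin d × Fin d)]
  · simp [_root_.swap]
  · intro r _ hr
    have : ¬(p.1 = r.2 ∧ p.2 = r.1) := by
      rintro ⟨h1, h2⟩; exact hr (by ext <;> simp [← h1, ← h2])
    simp [_root_.swap, this]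
  · simp

lemma mul_swap (M : Mat2 d) (p q : Fin d × Fin d) :
    (M * swap d) p q = M p (q.2, q.1) := by
  rw [Matrix.mul_apply, Finset.sum_eq_single ((q.2, q.1) : Fin d × Fin d)]
  · simp [_root_.swap]
  · intro r _ hr
    have : ¬(r.1 = q.2 ∧ r.2 = q.1) := by
      rintro ⟨h1, h2⟩; exact hr (by ext <;> simp [h1, h2])
    simp [_root_.swap, this]
  · simp

lemma swap_conjTranspose : (swap d)ᴴ = swap d := by
  ext p q
  simp only [Matrix.conjTranspose_apply, _root_.swap, Matrix.of_apply]
  by_cases h : q.1 = p.2 ∧ q.2 = p.1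
  · have h' : p.1 = q.2 ∧ p.2 = q.1 := ⟨h.2.symm, h.1.symm⟩
    rw [if_pos h, if_pos h']; simp
  · have h' : ¬(p.1 = q.2 ∧ p.2 = q.1) := fun hh => h ⟨hh.2.symm, hh.1.symm⟩
    rw [if_neg h, if_neg h']; simp

lemma swap_mul_swap : swap d * swap d = 1 := by
  ext p q
  rw [swap_mul]
  simp only [_root_.swap, Matrix.of_apply, Matrix.one_apply]
  by_cases h : p = q
  · subst h; simp
  · have h' : ¬(p.2 = q.2 ∧ p.1 = q.1) := fun hh => h (Prod.ext hh.2 hh.1)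
    simp [h, h']

lemma swap_mul_kron_mul_swap (A B : Mat d) :
    swap d * (A ⊗ₖ B) * swap d = B ⊗ₖ A := by
  ext p q
  rw [mul_swap, swap_mul]
  simp [mul_comm]

lemma trace_swap_mul_kron (A B : Mat d) :
    Matrix.trace (swap d * (A ⊗ₖ B)) = Matrix.trace (A * B) := by
  simp only [Matrix.trace, Matrix.diag]
  rw [Fintype.sum_prod_type]
  simp only [swap_mul, Matrix.kroneckerMap_apply]
  rw [Finset.sum_comm]
  simp [Matrix.mul_apply, mul_comm]

lemma kron_conjTranspose (A B : Mat d) : (A ⊗ₖ B)ᴴ = Aᴴ ⊗ₖ Bᴴ := by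
  ext p q; simp [Matrix.conjTranspose_apply, mul_comm]

/-- The key per-pair trace identity. -/
lemma perpair_identity (X Y : Mat d) :
    Matrix.trace (((1 - swap d) * (X ⊗ₖ Y) * (1 + swap d))ᴴ *
        ((1 - swap d) * (X ⊗ₖ Y) * (1 + swap d)))
      = 4 * (Matrix.trace (Xᴴ * X) * Matrix.trace (Yᴴ * Y)
            + Matrix.trace ((Xᴴ * X) * (Yᴴ * Y))
            - Matrix.trace ((X * Xᴴ) * (Y * Yᴴ))
            - Matrix.trace (Xᴴ * Y) * Matrix.trace (Yᴴ * X)) := by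
  set C : Mat2 d := X ⊗ₖ Y with hC
  set S : Mat2 d := swap d with hS
  have hSH : Sᴴ = S := swap_conjTranspose
  have hSS : S * S = 1 := swap_mul_swap
  have hG : ((1 - S) * C * (1 + S))ᴴ = (1 + S) * Cᴴ * (1 - S) := by
    simp only [Matrix.conjTranspose_mul, Matrix.conjTranspose_add, Matrix.conjTranspose_sub,
      Matrix.conjTranspose_one, hSH, Matrix.mul_assoc]
  rw [hG]
  have h2 : (1 - S) * (1 - S) = (1 - S) + (1 - S) := by
    rw [Matrix.sub_mul, Matrix.mul_sub, Matrix.mul_sub, hSS]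
    noncomm_ring
  have h2' : (1 + S) * (1 + S) = (1 + S) + (1 + S) := by
    rw [Matrix.add_mul, Matrix.mul_add, Matrix.mul_add, hSS]
    noncomm_ring
  set D : Mat2 d := Cᴴ * (1 - S) * C with hD
  have hA : (1 + S) * Cᴴ * (1 - S) * ((1 - S) * C * (1 + S))
      = (1 + S) * (Cᴴ * ((1 - S) * (1 - S)) * C) * (1 + S) := by
    noncomm_ring
  have hB : Cᴴ * ((1 - S) * (1 - S)) * C = D + D := by
    rw [h2, hD]; noncomm_ring
  rw [hA, hB, Matrix.trace_mul_cycle, Matrix.trace_mul_comm, h2']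
  have hE : (D + D) * ((1 + S) + (1 + S))
      = D * (1 + S) + D * (1 + S) + D * (1 + S) + D * (1 + S) := by
    noncomm_ring
  rw [hE]
  simp only [Matrix.trace_add]
  have hF : Matrix.trace (D * (1 + S))
      = Matrix.trace (Cᴴ * C) + Matrix.trace (Cᴴ * C * S)
        - Matrix.trace (Cᴴ * (S * C)) - Matrix.trace (Cᴴ * (S * C * S)) := by
    have : D * (1 + S) = Cᴴ * C + Cᴴ * C * S - Cᴴ * (S * C) - Cᴴ * (S * C * S) := by
      rw [hD]; noncomm_ring
    rw [this]
    simp only [Matrix.trace_add, Matrix.trace_sub]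
  rw [hF]
  have hCkron : Cᴴ * C = (Xᴴ * X) ⊗ₖ (Yᴴ * Y) := by
    rw [hC, kron_conjTranspose, ← Matrix.mul_kronecker_mul]
  have hCCH : C * Cᴴ = (X * Xᴴ) ⊗ₖ (Y * Yᴴ) := by
    rw [hC, kron_conjTranspose, ← Matrix.mul_kronecker_mul]
  have t1 : Matrix.trace (Cᴴ * C) = Matrix.trace (Xᴴ * X) * Matrix.trace (Yᴴ * Y) := by
    rw [hCkron, Matrix.trace_kronecker]
  have t2 : Matrix.trace (Cᴴ * C * S) = Matrix.trace ((Xᴴ * X) * (Yᴴ * Y)) := by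
    rw [Matrix.trace_mul_comm, hCkron, trace_swap_mul_kron]
  have t3 : Matrix.trace (Cᴴ * (S * C)) = Matrix.trace ((X * Xᴴ) * (Y * Yᴴ)) := by
    rw [Matrix.trace_mul_comm, Matrix.mul_assoc, hCCH, trace_swap_mul_kron]
  have t4 : Matrix.trace (Cᴴ * (S * C * S)) = Matrix.trace (Xᴴ * Y) * Matrix.trace (Yᴴ * X) := by
    rw [hC, show S * (X ⊗ₖ Y) * S = Y ⊗ₖ X from swap_mul_kron_mul_swap X Y,
      kron_conjTranspose, ← Matrix.mul_kronecker_mul, Matrix.trace_kronecker]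
  rw [t1, t2, t3, t4]
  ring

lemma perpair_ineq (X Y : Mat d) :
    (Matrix.trace ((X * Xᴴ) * (Y * Yᴴ))
      + Matrix.trace (Xᴴ * Y) * Matrix.trace (Yᴴ * X)).re
    ≤ (Matrix.trace (Xᴴ * X) * Matrix.trace (Yᴴ * Y)
      + Matrix.trace ((Xᴴ * X) * (Yᴴ * Y))).re := by
  have h := frob_nonneg ((1 - swap d) * (X ⊗ₖ Y) * (1 + swap d))
  rw [perpair_identity] at h
  have h4 : (0:ℝ) ≤ (Matrix.trace (Xᴴ * X) * Matrix.trace (Yᴴ * Y)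
            + Matrix.trace ((Xᴴ * X) * (Yᴴ * Y))
            - Matrix.trace ((X * Xᴴ) * (Y * Yᴴ))
            - Matrix.trace (Xᴴ * Y) * Matrix.trace (Yᴴ * X)).re := by
    rw [show ((4:ℂ) * (Matrix.trace (Xᴴ * X) * Matrix.trace (Yᴴ * Y)
            + Matrix.trace ((Xᴴ * X) * (Yᴴ * Y))
            - Matrix.trace ((X * Xᴴ) * (Y * Yᴴ))
            - Matrix.trace (Xᴴ * Y) * Matrix.trace (Yᴴ * X))).re
        = 4 * (Matrix.trace (Xᴴ * X) * Matrix.trace (Yᴴ * Y)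
            + Matrix.trace ((Xᴴ * X) * (Yᴴ * Y))
            - Matrix.trace ((X * Xᴴ) * (Y * Yᴴ))
            - Matrix.trace (Xᴴ * Y) * Matrix.trace (Yᴴ * X)).re by
      simp [Complex.mul_re]] at h
    linarith
  simp only [Complex.sub_re, Complex.add_re] at h4
  simp only [Complex.add_re]
  linarith



lemma trace_std (i j : Fin d) :
    (Matrix.single i j (1:ℂ)).trace = if i = j then 1 else 0 := by
  by_cases h : i = j
  · subst h; rw [Matrix.trace_single_eq_same, if_pos rfl]
  · rw [Matrix.trace_single_eq_of_ne i j _ h, if_neg h]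

lemma one_eq_sum_std : (1 : Mat d) = ∑ j, Matrix.single j j (1:ℂ) := by
  ext p q
  rw [Matrix.sum_apply]
  by_cases h : p = q
  · subst h
    rw [Matrix.one_apply_eq, Finset.sum_eq_single p (fun b _ hb => by
      simp [Matrix.single, hb]) (by simp)]
    simp [Matrix.single]
  · rw [Matrix.one_apply_ne h]
    refine (Finset.sum_eq_zero fun j _ => ?_).symm
    simp only [Matrix.single, Matrix.of_apply]
    rw [if_neg]
    rintro ⟨rfl, rfl⟩; exact h rfl



lemma psd_eq_conjTranspose_mul_self (M : Mat2 d) (h : M.PosSemidef) :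
    ∃ B : Mat2 d, M = Bᴴ * B := by
  classical
  open scoped MatrixOrder in
  obtain ⟨B, hB⟩ := CStarAlgebra.nonneg_iff_eq_star_mul_self.mp h.nonneg
  exact ⟨B, hB⟩

lemma core_ineq (E : Mat d →ₗ[ℂ] Mat d) (hCP : IsCP E) (hTP : IsTP E) :
    (Matrix.trace ((choi E)ᴴ * choi E)).re + (Matrix.trace ((E 1)ᴴ * (E 1))).re
      ≤ (d:ℝ)^2 + d := by
  obtain ⟨B, hB⟩ := psd_eq_conjTranspose_mul_self _ hCP
  set K : Fin d × Fin d → Mat d := fun a => Matrix.of fun k i => B a (k, i) with hK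
  have hJ : ∀ p q : Fin d × Fin d, choi E p q = ∑ a, (starRingEnd ℂ) (B a p) * B a q := by
    intro p q
    rw [hB]
    simp [Matrix.mul_apply, Matrix.conjTranspose_apply]
  -- Kraus completeness from TP
  have hKsum : ∑ a, (K a)ᴴ * K a = 1 := by
    ext i j
    rw [Matrix.sum_apply]
    have h1 : ∑ a, ((K a)ᴴ * K a) i j
        = ∑ k, ∑ a, (starRingEnd ℂ) (B a (k, i)) * B a (k, j) := by
      rw [Finset.sum_comm]
      refine Finset.sum_congr rfl fun a _ => ?_
      simp [Matrix.mul_apply, Matrix.conjTranspose_apply, hK]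
    have h2 : ∑ k, ∑ a, (starRingEnd ℂ) (B a (k, i)) * B a (k, j)
        = ∑ k : Fin d, choi E (k, i) (k, j) :=
      (Finset.sum_congr rfl fun k _ => (hJ _ _).symm)
    have h3 : ∑ k : Fin d, choi E (k, i) (k, j)
        = Matrix.trace (E (Matrix.single i j 1)) := by
      simp [choi, Matrix.trace, Matrix.diag]
    rw [h1, h2, h3, hTP, trace_std]
    by_cases h : i = j
    · subst h; simp [Matrix.one_apply]
    · simp [Matrix.one_apply, h]
  have htrK : ∀ a b : Fin d × Fin d,
      Matrix.trace ((K a)ᴴ * K b) = ∑ P : Fin d × Fin d, (starRingEnd ℂ) (B a P) * B b P := by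
    intro a b
    rw [trace_conjTranspose_mul_eq_sum, Fintype.sum_prod_type, Finset.sum_comm]
    rfl
  have hGram : ∀ a b : Fin d × Fin d, (B * Bᴴ) a b = Matrix.trace ((K b)ᴴ * K a) := by
    intro a b
    rw [htrK]
    simp [Matrix.mul_apply, Matrix.conjTranspose_apply, mul_comm]
  -- (I) trace of J²
  have traceJJ : Matrix.trace ((choi E)ᴴ * choi E)
      = ∑ a, ∑ b, Matrix.trace ((K b)ᴴ * K a) * Matrix.trace ((K a)ᴴ * K b) := by
    rw [hCP.1, hB]
    have : Bᴴ * B * (Bᴴ * B) = Bᴴ * (B * Bᴴ * B) := by noncomm_ring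
    rw [this, Matrix.trace_mul_comm]
    have : B * Bᴴ * B * Bᴴ = (B * Bᴴ) * (B * Bᴴ) := by noncomm_ring
    rw [this]
    rw [Matrix.trace]
    simp only [Matrix.diag, Matrix.mul_apply]
    refine Finset.sum_congr rfl fun a _ => Finset.sum_congr rfl fun b _ => ?_
    rw [← Matrix.mul_apply, ← Matrix.mul_apply, hGram, hGram]
  -- (II) trace of (E 1)ᴴ (E 1)
  have hE1 : E 1 = (∑ a, K a * (K a)ᴴ)ᵀ := by
    ext k l
    have h1 : E 1 k l = ∑ j, choi E (k, j) (l, j) := by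
      rw [show (1 : Mat d) = ∑ j, Matrix.single j j (1:ℂ) from one_eq_sum_std, map_sum]
      simp [choi, Matrix.sum_apply]
    rw [h1, Matrix.transpose_apply, Matrix.sum_apply]
    simp only [hJ]
    rw [Finset.sum_comm]
    refine Finset.sum_congr rfl fun a _ => ?_
    simp [Matrix.mul_apply, Matrix.conjTranspose_apply, hK, mul_comm]
  have hNH : (∑ a, K a * (K a)ᴴ)ᴴ = ∑ a, K a * (K a)ᴴ := by
    rw [Matrix.conjTranspose_sum]
    refine Finset.sum_congr rfl fun a _ => ?_
    rw [Matrix.conjTranspose_mul, Matrix.conjTranspose_conjTranspose]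
  have traceE1 : Matrix.trace ((E 1)ᴴ * E 1)
      = ∑ a, ∑ b, Matrix.trace ((K a * (K a)ᴴ) * (K b * (K b)ᴴ)) := by
    rw [hE1]
    set N : Mat d := ∑ a, K a * (K a)ᴴ with hN
    have h9 : (Nᵀ)ᴴ * Nᵀ = (N * Nᴴ)ᵀ := by
      rw [Matrix.transpose_mul]
      rfl
    rw [h9, Matrix.trace_transpose, hNH, hN, Finset.sum_mul, Matrix.trace_sum]
    refine Finset.sum_congr rfl fun a _ => ?_
    rw [Matrix.mul_sum, Matrix.trace_sum]
  -- (III) constants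
  have const1 : ∑ a : Fin d × Fin d, Matrix.trace ((K a)ᴴ * K a) = (d : ℂ) := by
    rw [← Matrix.trace_sum, hKsum, Matrix.trace_one]
    simp
  have const2 : ∑ a : Fin d × Fin d, ∑ b : Fin d × Fin d,
      Matrix.trace ((K a)ᴴ * K a) * Matrix.trace ((K b)ᴴ * K b) = (d : ℂ) * d := by
    rw [← Finset.sum_mul_sum, const1]
  have const3 : ∑ a : Fin d × Fin d, ∑ b : Fin d × Fin d,
      Matrix.trace (((K a)ᴴ * K a) * ((K b)ᴴ * K b)) = (d : ℂ) := by
    have : ∀ a, ∑ b : Fin d × Fin d, Matrix.trace (((K a)ᴴ * K a) * ((K b)ᴴ * K b))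
        = Matrix.trace (((K a)ᴴ * K a) * 1) := by
      intro a
      rw [← hKsum, Matrix.mul_sum, Matrix.trace_sum]
    simp only [this, Matrix.mul_one]
    rw [← Matrix.trace_sum, hKsum, Matrix.trace_one]
    simp
  -- (IV) sum the per-pair inequalities
  have hsum : ∑ a : Fin d × Fin d, ∑ b : Fin d × Fin d,
        (Matrix.trace ((K a * (K a)ᴴ) * (K b * (K b)ᴴ))
          + Matrix.trace ((K a)ᴴ * K b) * Matrix.trace ((K b)ᴴ * K a)).re
      ≤ ∑ a : Fin d × Fin d, ∑ b : Fin d × Fin d,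
        (Matrix.trace ((K a)ᴴ * K a) * Matrix.trace ((K b)ᴴ * K b)
          + Matrix.trace (((K a)ᴴ * K a) * ((K b)ᴴ * K b))).re := by
    refine Finset.sum_le_sum fun a _ => Finset.sum_le_sum fun b _ => ?_
    exact perpair_ineq (K a) (K b)
  have lhs_eq : ∑ a : Fin d × Fin d, ∑ b : Fin d × Fin d,
        (Matrix.trace ((K a * (K a)ᴴ) * (K b * (K b)ᴴ))
          + Matrix.trace ((K a)ᴴ * K b) * Matrix.trace ((K b)ᴴ * K a)).re
      = (Matrix.trace ((E 1)ᴴ * E 1)).re + (Matrix.trace ((choi E)ᴴ * choi E)).re := by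
    rw [traceE1, traceJJ]
    simp only [Complex.re_sum, Complex.add_re, Finset.sum_add_distrib]
    congr 1
    refine Finset.sum_congr rfl fun a _ => Finset.sum_congr rfl fun b _ => ?_
    rw [mul_comm]
  have rhs_eq : ∑ a : Fin d × Fin d, ∑ b : Fin d × Fin d,
        (Matrix.trace ((K a)ᴴ * K a) * Matrix.trace ((K b)ᴴ * K b)
          + Matrix.trace (((K a)ᴴ * K a) * ((K b)ᴴ * K b))).re
      = (d:ℝ)^2 + d := by
    have hc : (∑ a : Fin d × Fin d, ∑ b : Fin d × Fin d,
        (Matrix.trace ((K a)ᴴ * K a) * Matrix.trace ((K b)ᴴ * K b)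
          + Matrix.trace (((K a)ᴴ * K a) * ((K b)ᴴ * K b)))) = (d:ℂ) * d + d := by
      simp only [Finset.sum_add_distrib]
      rw [const2, const3]
    calc ∑ a : Fin d × Fin d, ∑ b : Fin d × Fin d,
          (Matrix.trace ((K a)ᴴ * K a) * Matrix.trace ((K b)ᴴ * K b)
            + Matrix.trace (((K a)ᴴ * K a) * ((K b)ᴴ * K b))).re
        = (∑ a : Fin d × Fin d, ∑ b : Fin d × Fin d,
            (Matrix.trace ((K a)ᴴ * K a) * Matrix.trace ((K b)ᴴ * K b)
              + Matrix.trace (((K a)ᴴ * K a) * ((K b)ᴴ * K b)))).re := by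
          simp only [Complex.re_sum]
      _ = ((d:ℂ) * d + d).re := by rw [hc]
      _ = (d:ℝ)^2 + d := by
          simp [Complex.add_re, Complex.mul_re]
          ring
  linarith [hsum, lhs_eq, rhs_eq]



lemma entry_linear (E : Mat d →ₗ[ℂ] Mat d) (i j : Fin d) (Y : Mat d) :
    (E Y) i j = ∑ q, ∑ p, Y p q * (E (Matrix.single p q 1)) i j := by
  have expand : (E Y) i j = ∑ p, ∑ q, Y p q * (E (Matrix.single p q 1)) i j := by
    conv_lhs => rw [Matrix.matrix_eq_sum_single Y]
    rw [map_sum, Matrix.sum_apply]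
    refine Finset.sum_congr rfl fun p _ => ?_
    rw [map_sum, Matrix.sum_apply]
    refine Finset.sum_congr rfl fun q _ => ?_
    have h5 : Matrix.single p q (Y p q) = (Y p q) • Matrix.single p q (1:ℂ) := by
      rw [Matrix.smul_single, smul_eq_mul, mul_one]
    rw [h5, _root_.map_smul, Matrix.smul_apply, smul_eq_mul]
  rw [expand, Finset.sum_comm]

section withbasis
variable (A : Fin (d ^ 2) → Mat d)
  (horth : ∀ k l : Fin (d ^ 2), Matrix.trace ((A k)ᴴ * A l) = if k = l then 1 else 0)
  (hspan : Submodule.span ℂ (Set.range A) = ⊤)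
  (E : Mat d →ₗ[ℂ] Mat d)

include horth hspan in
lemma liou_total :
    ∑ k, ∑ l, ‖Liou A E k l‖ ^ 2 = (Matrix.trace ((choi E)ᴴ * choi E)).re := by
  have step1 : ∑ k, ∑ l, ‖Liou A E k l‖ ^ 2
      = ∑ l, ∑ j, ∑ i, ‖(E (A l)) i j‖ ^ 2 := by
    rw [Finset.sum_comm]
    refine Finset.sum_congr rfl fun l _ => ?_
    have : ∑ k, ‖Liou A E k l‖ ^ 2
        = (Matrix.trace ((E (A l))ᴴ * (E (A l)))).re := by
      rw [← parseval_norm A horth hspan (E (A l))]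
      rfl
    rw [this, frob]
  rw [step1]
  -- reorder to ∑ j ∑ i ∑ l
  have step2 : ∑ l, ∑ j, ∑ i, ‖(E (A l)) i j‖ ^ 2
      = ∑ j, ∑ i, ∑ l, ‖(E (A l)) i j‖ ^ 2 := by
    rw [Finset.sum_comm]
    exact Finset.sum_congr rfl fun j _ => Finset.sum_comm
  rw [step2]
  -- for fixed (i,j), apply Parseval with the representing matrix F
  have step3 : ∀ i j : Fin d, ∑ l, ‖(E (A l)) i j‖ ^ 2
      = ∑ q, ∑ p, ‖(E (Matrix.single p q 1)) i j‖ ^ 2 := by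
    intro i j
    set F : Mat d := Matrix.of fun p q =>
      (starRingEnd ℂ) ((E (Matrix.single p q 1)) i j) with hFdef
    have hF : ∀ Y : Mat d, (E Y) i j = Matrix.trace (Fᴴ * Y) := by
      intro Y
      rw [entry_linear, trace_conjTranspose_mul_eq_sum]
      refine Finset.sum_congr rfl fun q _ => Finset.sum_congr rfl fun p _ => ?_
      simp only [hFdef, Matrix.of_apply, Complex.conj_conj]
      ring
    have h1 : ∀ l, ‖(E (A l)) i j‖ = ‖Matrix.trace ((A l)ᴴ * F)‖ := by
      intro l
      rw [hF, ← star_trace_conjTranspose_mul F (A l), RCLike.norm_conj]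
    simp only [h1]
    rw [parseval_norm A horth hspan F, frob]
    refine Finset.sum_congr rfl fun q _ => Finset.sum_congr rfl fun p _ => ?_
    simp [hFdef]
  have step4 : ∑ j, ∑ i, ∑ l, ‖(E (A l)) i j‖ ^ 2
      = ∑ j, ∑ i : Fin d, ∑ q, ∑ p, ‖(E (Matrix.single p q 1)) i j‖ ^ 2 :=
    Finset.sum_congr rfl fun j _ => Finset.sum_congr rfl fun i _ => step3 i j
  rw [step4, frob]
  rw [Fintype.sum_prod_type]
  refine Finset.sum_congr rfl fun j _ => ?_
  rw [Finset.sum_comm]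
  refine Finset.sum_congr rfl fun i _ => ?_
  rw [Fintype.sum_prod_type]
  refine Finset.sum_congr rfl fun q _ => Finset.sum_congr rfl fun p _ => ?_
  rfl

end withbasis

end Stmt10

open Stmt10

set_option maxHeartbeats 1000000

/-- For CPTP `E`, `‖𝓔ₙ‖² ≤ (d−1)(1 − u(E))`. -/
theorem statement_10 (d : ℕ) (hd : 2 ≤ d)
    (A : Fin (d ^ 2) → Mat d)
    (horth : ∀ k l : Fin (d ^ 2), Matrix.trace ((A k)ᴴ * A l) = if k = l then 1 else 0)
    (hspan : Submodule.span ℂ (Set.range A) = ⊤)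
    (hA0 : ∀ k : Fin (d ^ 2), (k : ℕ) = 0 → A k = ((Real.sqrt d : ℝ) : ℂ)⁻¹ • 1)
    (E : Mat d →ₗ[ℂ] Mat d) (hCP : IsCP E) (hTP : IsTP E) :
    nSq A E ≤ ((d : ℝ) - 1) * (1 - unitarity A E) := by
  have hdpos : 0 < d := by omega
  have hd2 : 0 < d ^ 2 := by positivity
  set i0 : Fin (d ^ 2) := ⟨0, hd2⟩ with hi0
  have hval : ∀ k : Fin (d ^ 2), (k : ℕ) = 0 ↔ k = i0 := by
    intro k
    constructor
    · intro h; exact Fin.ext h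
    · rintro rfl; rfl
  have hf0 : Finset.univ.filter (fun k : Fin (d ^ 2) => (k : ℕ) = 0) = {i0} := by
    ext k; simp [hval k]
  have hfne : Finset.univ.filter (fun k : Fin (d ^ 2) => (k : ℕ) ≠ 0)
      = Finset.univ.erase i0 := by
    ext k; simp [hval k]
  set c : ℂ := ((Real.sqrt d : ℝ) : ℂ)⁻¹ with hc
  have hA0' : A i0 = c • 1 := hA0 i0 rfl
  have hsd : (0:ℝ) < Real.sqrt d := Real.sqrt_pos.mpr (by positivity)
  have hstarc : star c = c := by
    rw [hc]
    simp [Complex.star_def, map_inv₀, Complex.conj_ofReal]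
  have hnormc : ‖c‖ ^ 2 = (d:ℝ)⁻¹ := by
    have h9 : ‖((Real.sqrt d : ℝ) : ℂ)‖ = Real.sqrt d := by
      rw [Complex.norm_real, Real.norm_eq_abs, abs_of_pos hsd]
    rw [hc, norm_inv, inv_pow, h9, Real.sq_sqrt (by positivity)]
  have htr1 : Matrix.trace (E 1) = (d:ℂ) := by
    rw [hTP 1, Matrix.trace_one]
    simp
  -- row i0 of the Liouville matrix is a delta function
  have hAsmul : ∀ M : Mat d, (A i0)ᴴ * M = star c • M := by
    intro M
    rw [hA0', Matrix.conjTranspose_smul, Matrix.conjTranspose_one, Matrix.smul_mul,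
      Matrix.one_mul]
  have hrow : ∀ l, Liou A E i0 l = if i0 = l then 1 else 0 := by
    intro l
    have h1 : Liou A E i0 l = star c • Matrix.trace (E (A l)) := by
      show Matrix.trace ((A i0)ᴴ * E (A l)) = _
      rw [hAsmul, Matrix.trace_smul]
    have h2 := horth i0 l
    rw [hAsmul, Matrix.trace_smul] at h2
    rw [h1, hTP (A l)]
    exact h2
  -- the nonunital column entries
  have hcol : ∀ k, Liou A E k i0 = c * Matrix.trace ((A k)ᴴ * E 1) := by
    intro k
    show Matrix.trace ((A k)ᴴ * E (A i0)) = _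
    rw [hA0', _root_.map_smul, Matrix.mul_smul, Matrix.trace_smul, smul_eq_mul]
  set s : ℝ := (Matrix.trace ((E 1)ᴴ * (E 1))).re with hs
  set n : ℝ := nSq A E with hn
  -- nSq in terms of s
  have hnSq : n = (d:ℝ)⁻¹ * (s - d) := by
    rw [hn]
    unfold nSq
    rw [hfne, hf0]
    simp only [Finset.sum_singleton]
    have hterm : ∀ k, ‖Liou A E k i0‖ ^ 2
        = (d:ℝ)⁻¹ * ‖Matrix.trace ((A k)ᴴ * E 1)‖ ^ 2 := by
      intro k
      rw [hcol, norm_mul, mul_pow, hnormc]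
    simp only [hterm]
    rw [← Finset.mul_sum]
    congr 1
    have hsplit : (∑ k ∈ Finset.univ.erase i0, ‖Matrix.trace ((A k)ᴴ * E 1)‖ ^ 2)
        + ‖Matrix.trace ((A i0)ᴴ * E 1)‖ ^ 2
        = ∑ k, ‖Matrix.trace ((A k)ᴴ * E 1)‖ ^ 2 :=
      Finset.sum_erase_add _ _ (Finset.mem_univ i0)
    have htot : ∑ k, ‖Matrix.trace ((A k)ᴴ * E 1)‖ ^ 2 = s :=
      parseval_norm A horth hspan (E 1)
    have hAt : ‖Matrix.trace ((A i0)ᴴ * E 1)‖ ^ 2 = (d:ℝ) := by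
      rw [hAsmul, Matrix.trace_smul, htr1, smul_eq_mul, norm_mul, mul_pow, norm_star, hnormc]
      rw [Complex.norm_natCast, sq]
      have hdne : (d:ℝ) ≠ 0 := by positivity
      field_simp
    rw [htot, hAt] at hsplit
    linarith
  -- the total sum
  set t : ℝ := ∑ k, ∑ l, ‖Liou A E k l‖ ^ 2 with ht
  have hT : t = (Matrix.trace ((choi E)ᴴ * choi E)).re := liou_total A horth hspan E
  have hrowsum : ∑ l, ‖Liou A E i0 l‖ ^ 2 = 1 := by
    simp only [hrow]
    rw [Finset.sum_eq_single i0]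
    · simp
    · intro b _ hb
      rw [if_neg (fun h => hb h.symm)]
      simp
    · simp
  set uS : ℝ := ∑ k ∈ Finset.univ.erase i0, ∑ l ∈ Finset.univ.erase i0,
    ‖Liou A E k l‖ ^ 2 with huS
  have hnval : n = ∑ k ∈ Finset.univ.erase i0, ‖Liou A E k i0‖ ^ 2 := by
    rw [hn]
    unfold nSq
    rw [hfne, hf0]
    simp only [Finset.sum_singleton]
  have hUsplit : uS + n = ∑ k ∈ Finset.univ.erase i0, ∑ l, ‖Liou A E k l‖ ^ 2 := by
    rw [huS, hnval, ← Finset.sum_add_distrib]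
    refine Finset.sum_congr rfl fun k _ => ?_
    exact Finset.sum_erase_add Finset.univ _ (Finset.mem_univ i0)
  have hTsplit : (∑ k ∈ Finset.univ.erase i0, ∑ l, ‖Liou A E k l‖ ^ 2) + 1 = t := by
    rw [ht, ← hrowsum]
    exact Finset.sum_erase_add Finset.univ _ (Finset.mem_univ i0)
  have hu : unitarity A E = uS / ((d:ℝ)^2 - 1) := by
    unfold unitarity
    rw [hfne]
  -- core inequality
  have hcore : (Matrix.trace ((choi E)ᴴ * choi E)).re + s ≤ (d:ℝ)^2 + d :=
    core_ineq E hCP hTP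
  have hts : t + s ≤ (d:ℝ)^2 + d := by rw [hT]; exact hcore
  -- final arithmetic
  set D : ℝ := (d:ℝ) with hD
  have hD2 : (2:ℝ) ≤ D := by rw [hD]; exact_mod_cast hd
  have hs_eq : s = D * n + D := by
    rw [hnSq, hD]
    have hdne : (d:ℝ) ≠ 0 := by positivity
    field_simp
    ring
  have huSval : uS = t - 1 - n := by linarith [hUsplit, hTsplit]
  have hfinal : ∀ tv sv nv uv Dv : ℝ, 2 ≤ Dv → sv = Dv * nv + Dv → uv = tv - 1 - nv →
      tv + sv ≤ Dv^2 + Dv → nv ≤ (Dv - 1) * (1 - uv / (Dv^2 - 1)) := by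
    intro tv sv nv uv Dv h2 h3 h4 h5
    have hD1 : (0:ℝ) < Dv^2 - 1 := by nlinarith
    have hDp1 : (0:ℝ) < Dv + 1 := by nlinarith
    have hrw : (Dv - 1) * (1 - uv / (Dv^2 - 1)) = (Dv - 1) - uv / (Dv + 1) := by
      field_simp
      ring
    rw [hrw]
    have hkey : uv / (Dv + 1) ≤ Dv - 1 - nv := by
      rw [div_le_iff₀ hDp1]
      nlinarith
    linarith
  rw [hu]
  exact hfinal t s n uS D hD2 hs_eq huSval hts
end

section
/- For any linear map E : M_d(ℂ) → M_d(ℂ) and any unitaries U, V ∈ U(d), letting 𝓤(ρ) = UρU† and 𝓥(ρ) = VρV†, the unitarity is invariant under unitary pre- and post-composition: u(𝓥 ∘ E ∘ 𝓤) = u(E). -/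
open Matrix Kronecker ComplexOrder MeasureTheory

variable {d : ℕ}

section Statement11Helpers

variable {d : ℕ}

/-- The coordinate-expansion map associated to the family `A`. -/
noncomputable def coeffMap (A : Fin (d ^ 2) → Mat d) : Mat d →ₗ[ℂ] Mat d where
  toFun X := ∑ k, Matrix.trace ((A k)ᴴ * X) • A k
  map_add' X Y := by simp [Matrix.mul_add, Matrix.trace_add, add_smul, Finset.sum_add_distrib]
  map_smul' c X := by simp [Matrix.mul_smul, Matrix.trace_smul, smul_smul, Finset.smul_sum]

lemma expansion (A : Fin (d ^ 2) → Mat d)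
    (horth : ∀ k l, Matrix.trace ((A k)ᴴ * A l) = if k = l then 1 else 0)
    (hspan : Submodule.span ℂ (Set.range A) = ⊤) (X : Mat d) :
    X = ∑ k, Matrix.trace ((A k)ᴴ * X) • A k := by
  have h : LinearMap.id (R := ℂ) (M := Mat d) = coeffMap A := by
    apply LinearMap.ext_on hspan
    rintro _ ⟨l, rfl⟩
    simp [coeffMap, horth, ite_smul]
  have := congrFun (congrArg (fun f => f.toFun) h) X
  simpa [coeffMap] using this

lemma parseval_polar (A : Fin (d ^ 2) → Mat d)
    (horth : ∀ k l, Matrix.trace ((A k)ᴴ * A l) = if k = l then 1 else 0)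
    (hspan : Submodule.span ℂ (Set.range A) = ⊤) (X Y : Mat d) :
    Matrix.trace (Xᴴ * Y)
      = ∑ k, star (Matrix.trace ((A k)ᴴ * X)) * Matrix.trace ((A k)ᴴ * Y) := by
  conv_lhs => rw [expansion A horth hspan X]
  rw [conjTranspose_sum, Finset.sum_mul, Matrix.trace_sum]
  refine Finset.sum_congr rfl fun k _ => ?_
  rw [conjTranspose_smul, smul_mul_assoc, Matrix.trace_smul, smul_eq_mul]

lemma parseval_s11 (A : Fin (d ^ 2) → Mat d)
    (horth : ∀ k l, Matrix.trace ((A k)ᴴ * A l) = if k = l then 1 else 0)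
    (hspan : Submodule.span ℂ (Set.range A) = ⊤) (X : Mat d) :
    ∑ k, ‖Matrix.trace ((A k)ᴴ * X)‖ ^ 2 = (Matrix.trace (Xᴴ * X)).re := by
  rw [parseval_polar A horth hspan X X, Complex.re_sum]
  refine Finset.sum_congr rfl fun k _ => ?_
  set c := Matrix.trace ((A k)ᴴ * X)
  rw [Complex.star_def, mul_comm, Complex.mul_conj]
  rw [Complex.normSq_eq_norm_sq]
  norm_cast

lemma core_sum {n : ℕ} (C : Matrix (Fin n) (Fin n) ℂ) (hC : Cᴴ * C = 1)
    (t : Fin n → Fin n → ℂ) :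
    ∑ l, ∑ m, ∑ m', star (C l m) * C l m' * t m m' = ∑ m, t m m := by
  have hmain : ∀ m, ∑ l, ∑ m', star (C l m) * C l m' * t m m' = t m m := by
    intro m
    have h1 : ∑ l, ∑ m', star (C l m) * C l m' * t m m'
        = ∑ m', (Cᴴ * C) m m' * t m m' := by
      rw [Finset.sum_comm]
      refine Finset.sum_congr rfl fun m' _ => ?_
      rw [Matrix.mul_apply, Finset.sum_mul]
      refine Finset.sum_congr rfl fun l _ => ?_
      rw [Matrix.conjTranspose_apply]
    rw [h1, hC]
    simp [Matrix.one_apply, ite_mul]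
  rw [Finset.sum_comm]
  exact Finset.sum_congr rfl fun m _ => hmain m

lemma sq_expand {n : ℕ} (c a : Fin n → ℂ) :
    star (∑ m, c m * a m) * (∑ m, c m * a m)
      = ∑ m, ∑ m', star (c m) * c m' * (star (a m) * a m') := by
  rw [star_sum, Finset.sum_mul]
  refine Finset.sum_congr rfl fun m _ => ?_
  rw [Finset.mul_sum]
  refine Finset.sum_congr rfl fun m' _ => ?_
  rw [star_mul']
  ring

lemma trace_sq_expand {n : ℕ} (c : Fin n → ℂ) (X : Fin n → Mat d) :
    Matrix.trace ((∑ m, c m • X m)ᴴ * (∑ m, c m • X m))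
      = ∑ m, ∑ m', star (c m) * c m' * Matrix.trace ((X m)ᴴ * X m') := by
  rw [conjTranspose_sum, Finset.sum_mul, Matrix.trace_sum]
  refine Finset.sum_congr rfl fun m _ => ?_
  rw [Finset.mul_sum, Matrix.trace_sum]
  refine Finset.sum_congr rfl fun m' _ => ?_
  rw [conjTranspose_smul, smul_mul_assoc, Matrix.mul_smul, Matrix.trace_smul,
    Matrix.trace_smul, smul_eq_mul, smul_eq_mul]
  ring

lemma C_unitary (A B : Fin (d ^ 2) → Mat d)
    (horthA : ∀ k l, Matrix.trace ((A k)ᴴ * A l) = if k = l then 1 else 0)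
    (hspanA : Submodule.span ℂ (Set.range A) = ⊤)
    (horthB : ∀ k l, Matrix.trace ((B k)ᴴ * B l) = if k = l then 1 else 0) :
    (Matrix.of fun l m => Matrix.trace ((A m)ᴴ * B l))ᴴ
      * (Matrix.of fun l m => Matrix.trace ((A m)ᴴ * B l)) = 1 := by
  set C : Matrix (Fin (d ^ 2)) (Fin (d ^ 2)) ℂ :=
    Matrix.of fun l m => Matrix.trace ((A m)ᴴ * B l) with hCdef
  rw [mul_eq_one_comm]
  ext l l'
  have hp := parseval_polar A horthA hspanA (B l) (B l')
  have : (C * Cᴴ) l l' = star (Matrix.trace ((B l)ᴴ * B l')) := by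
    rw [hp, star_sum]
    rw [Matrix.mul_apply]
    refine Finset.sum_congr rfl fun m _ => ?_
    rw [Matrix.conjTranspose_apply, star_mul', star_star]
    simp [hCdef, mul_comm]
  rw [this, horthB]
  simp [Matrix.one_apply]

lemma basis_change (A B : Fin (d ^ 2) → Mat d)
    (horthA : ∀ k l, Matrix.trace ((A k)ᴴ * A l) = if k = l then 1 else 0)
    (hspanA : Submodule.span ℂ (Set.range A) = ⊤)
    (horthB : ∀ k l, Matrix.trace ((B k)ᴴ * B l) = if k = l then 1 else 0)
    (T : Mat d →ₗ[ℂ] Mat d) :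
    ∑ l, Matrix.trace ((T (B l))ᴴ * T (B l))
      = ∑ m, Matrix.trace ((T (A m))ᴴ * T (A m)) := by
  set C : Matrix (Fin (d ^ 2)) (Fin (d ^ 2)) ℂ :=
    Matrix.of fun l m => Matrix.trace ((A m)ᴴ * B l) with hCdef
  have hTB : ∀ l, T (B l) = ∑ m, C l m • T (A m) := by
    intro l
    conv_lhs => rw [expansion A horthA hspanA (B l)]
    rw [map_sum]
    exact Finset.sum_congr rfl fun m _ => by rw [_root_.map_smul]; rfl
  calc ∑ l, Matrix.trace ((T (B l))ᴴ * T (B l))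
      = ∑ l, ∑ m, ∑ m', star (C l m) * C l m'
          * Matrix.trace ((T (A m))ᴴ * T (A m')) := by
        refine Finset.sum_congr rfl fun l _ => ?_
        rw [hTB l, trace_sq_expand]
    _ = ∑ m, Matrix.trace ((T (A m))ᴴ * T (A m)) :=
        core_sum C (C_unitary A B horthA hspanA horthB) _

lemma basis_change_fun (A B : Fin (d ^ 2) → Mat d)
    (horthA : ∀ k l, Matrix.trace ((A k)ᴴ * A l) = if k = l then 1 else 0)
    (hspanA : Submodule.span ℂ (Set.range A) = ⊤)
    (horthB : ∀ k l, Matrix.trace ((B k)ᴴ * B l) = if k = l then 1 else 0)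
    (φ : Mat d →ₗ[ℂ] ℂ) :
    ∑ l, star (φ (B l)) * φ (B l) = ∑ m, star (φ (A m)) * φ (A m) := by
  set C : Matrix (Fin (d ^ 2)) (Fin (d ^ 2)) ℂ :=
    Matrix.of fun l m => Matrix.trace ((A m)ᴴ * B l) with hCdef
  have hTB : ∀ l, φ (B l) = ∑ m, C l m * φ (A m) := by
    intro l
    conv_lhs => rw [expansion A horthA hspanA (B l)]
    rw [map_sum]
    exact Finset.sum_congr rfl fun m _ => by rw [_root_.map_smul]; rfl
  calc ∑ l, star (φ (B l)) * φ (B l)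
      = ∑ l, ∑ m, ∑ m', star (C l m) * C l m' * (star (φ (A m)) * φ (A m')) := by
        refine Finset.sum_congr rfl fun l _ => ?_
        rw [hTB l, sq_expand]
    _ = ∑ m, star (φ (A m)) * φ (A m) :=
        core_sum C (C_unitary A B horthA hspanA horthB) _

lemma trace_conj (W : Mat d) (hW : Wᴴ * W = 1) (X : Mat d) :
    Matrix.trace (W * X * Wᴴ) = Matrix.trace X := by
  rw [Matrix.trace_mul_cycle, hW, Matrix.one_mul]

lemma trace_conj_mul (W : Mat d) (hW : Wᴴ * W = 1) (X Y : Mat d) :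
    Matrix.trace ((W * X * Wᴴ)ᴴ * (W * Y * Wᴴ)) = Matrix.trace (Xᴴ * Y) := by
  have h : (W * X * Wᴴ)ᴴ * (W * Y * Wᴴ) = W * (Xᴴ * Y) * Wᴴ := by
    rw [Matrix.conjTranspose_mul, Matrix.conjTranspose_mul, Matrix.conjTranspose_conjTranspose]
    calc W * (Xᴴ * Wᴴ) * (W * Y * Wᴴ) = W * (Xᴴ * (Wᴴ * W) * (Y * Wᴴ)) := by
          noncomm_ring [Matrix.mul_assoc]
      _ = W * (Xᴴ * Y) * Wᴴ := by rw [hW]; noncomm_ring [Matrix.mul_assoc]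
  rw [h, trace_conj W hW]

lemma conj_orth (A : Fin (d ^ 2) → Mat d)
    (horth : ∀ k l, Matrix.trace ((A k)ᴴ * A l) = if k = l then 1 else 0)
    (W : Mat d) (hW : Wᴴ * W = 1) :
    ∀ k l, Matrix.trace ((W * A k * Wᴴ)ᴴ * (W * A l * Wᴴ)) = if k = l then 1 else 0 := by
  intro k l
  rw [trace_conj_mul W hW, horth]

lemma split_sum {n : ℕ} (k0 : Fin n) (hk0 : (k0 : ℕ) = 0) (x : Fin n → Fin n → ℝ) :
    ∑ k ∈ Finset.univ.filter (fun k : Fin n => (k : ℕ) ≠ 0),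
      ∑ l ∈ Finset.univ.filter (fun l : Fin n => (l : ℕ) ≠ 0), x k l
      = (∑ k, ∑ l, x k l) - (∑ l, x k0 l) - (∑ k, x k k0) + x k0 k0 := by
  have hfil : Finset.univ.filter (fun k : Fin n => (k : ℕ) = 0) = {k0} := by
    ext k
    simp only [Finset.mem_filter, Finset.mem_univ, true_and, Finset.mem_singleton]
    constructor
    · intro h; exact Fin.ext (by rw [h, hk0])
    · intro h; rw [h, hk0]
  have key : ∀ y : Fin n → ℝ,
      ∑ k ∈ Finset.univ.filter (fun k : Fin n => (k : ℕ) ≠ 0), y k = (∑ k, y k) - y k0 := by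
    intro y
    have := Finset.sum_filter_add_sum_filter_not Finset.univ (fun k : Fin n => (k : ℕ) = 0) y
    rw [hfil, Finset.sum_singleton] at this
    linarith
  rw [key]
  have inner : ∀ k, ∑ l ∈ Finset.univ.filter (fun l : Fin n => (l : ℕ) ≠ 0), x k l
      = (∑ l, x k l) - x k k0 := fun k => key (x k)
  simp_rw [inner]
  rw [Finset.sum_sub_distrib]
  ring

end Statement11Helpers

/-- The unitarity is invariant under pre- and post-composition with
unitary conjugations: `u(𝓥 ∘ E ∘ 𝓤) = u(E)`. -/
theorem statement_11 (d : ℕ) (hd : 2 ≤ d)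
    (A : Fin (d ^ 2) → Mat d)
    (horth : ∀ k l : Fin (d ^ 2), Matrix.trace ((A k)ᴴ * A l) = if k = l then 1 else 0)
    (hspan : Submodule.span ℂ (Set.range A) = ⊤)
    (hA0 : ∀ k : Fin (d ^ 2), (k : ℕ) = 0 → A k = ((Real.sqrt d : ℝ) : ℂ)⁻¹ • 1)
    (E : Mat d →ₗ[ℂ] Mat d) (U V : Mat d)
    (hU : U ∈ Matrix.unitaryGroup (Fin d) ℂ) (hV : V ∈ Matrix.unitaryGroup (Fin d) ℂ) :
    unitarity A (conjMap V ∘ₗ E ∘ₗ conjMap U) = unitarity A E := by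
  have hd0 : 0 < d := by omega
  have hd2 : 0 < d ^ 2 := by positivity
  set k0 : Fin (d ^ 2) := ⟨0, hd2⟩ with hk0def
  have hU1 : Uᴴ * U = 1 := by
    have := Matrix.mem_unitaryGroup_iff'.mp hU
    rwa [Matrix.star_eq_conjTranspose] at this
  have hUU : U * Uᴴ = 1 := mul_eq_one_comm.mp hU1
  have hV1 : Vᴴ * V = 1 := by
    have := Matrix.mem_unitaryGroup_iff'.mp hV
    rwa [Matrix.star_eq_conjTranspose] at this
  set F : Mat d →ₗ[ℂ] Mat d := conjMap V ∘ₗ E ∘ₗ conjMap U with hFdef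
  set B : Fin (d ^ 2) → Mat d := fun l => U * A l * Uᴴ with hBdef
  have horthB : ∀ k l, Matrix.trace ((B k)ᴴ * B l) = if k = l then 1 else 0 :=
    conj_orth A horth U hU1
  have hFX : ∀ X, F X = V * E (U * X * Uᴴ) * Vᴴ := by
    intro X
    simp [hFdef, conjMap, LinearMap.mulLeft_apply, LinearMap.mulRight_apply, Matrix.mul_assoc]
  set c : ℂ := ((Real.sqrt d : ℝ) : ℂ)⁻¹ with hcdef
  have hA0' : A k0 = c • 1 := hA0 k0 rfl
  have hAk0H : (A k0)ᴴ = c • 1 := by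
    rw [hA0', conjTranspose_smul, Matrix.conjTranspose_one]
    congr 1
    simp [hcdef]
  have hL0 : ∀ M : Mat d, Matrix.trace ((A k0)ᴴ * M) = c * Matrix.trace M := by
    intro M
    rw [hAk0H, smul_mul_assoc, Matrix.one_mul, Matrix.trace_smul, smul_eq_mul]
  have hBk0 : B k0 = A k0 := by
    show U * A k0 * Uᴴ = A k0
    rw [hA0', Matrix.mul_smul, Matrix.mul_one, Matrix.smul_mul, hUU]
  have hFk0 : F (A k0) = V * E (A k0) * Vᴴ := by
    rw [hFX]
    have : U * A k0 * Uᴴ = A k0 := hBk0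
    rw [this]
  have hszre : ∀ z : ℂ, (star z * z).re = ‖z‖ ^ 2 := fun z => by
    rw [Complex.star_def, mul_comm, Complex.mul_conj, Complex.normSq_eq_norm_sq]
    norm_cast
  -- Parseval in matrix form for the double sums
  have hpars : ∀ T : Mat d →ₗ[ℂ] Mat d,
      ∑ k, ∑ l, ‖Liou A T k l‖ ^ 2
        = (∑ l, Matrix.trace ((T (A l))ᴴ * T (A l))).re := by
    intro T
    rw [Finset.sum_comm, Complex.re_sum]
    exact Finset.sum_congr rfl fun l _ => parseval_s11 A horth hspan (T (A l))
  -- piece 1 : total sum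
  have htotal : ∑ k, ∑ l, ‖Liou A F k l‖ ^ 2 = ∑ k, ∑ l, ‖Liou A E k l‖ ^ 2 := by
    rw [hpars F, hpars E]
    congr 1
    calc ∑ l, Matrix.trace ((F (A l))ᴴ * F (A l))
        = ∑ l, Matrix.trace ((E (B l))ᴴ * E (B l)) := by
          refine Finset.sum_congr rfl fun l _ => ?_
          rw [hFX]
          exact trace_conj_mul V hV1 _ _
      _ = _ := basis_change A B horth hspan horthB E
  -- piece 2 : row
  have htrEB : ∑ l, ‖Matrix.trace (E (B l))‖ ^ 2 = ∑ l, ‖Matrix.trace (E (A l))‖ ^ 2 := by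
    have h := basis_change_fun A B horth hspan horthB
      (Matrix.traceLinearMap (Fin d) ℂ ℂ ∘ₗ E)
    have h2 := congrArg Complex.re h
    rw [Complex.re_sum, Complex.re_sum] at h2
    calc ∑ l, ‖Matrix.trace (E (B l))‖ ^ 2
        = ∑ l, (star (Matrix.trace (E (B l))) * Matrix.trace (E (B l))).re :=
          Finset.sum_congr rfl fun l _ => (hszre _).symm
      _ = ∑ l, (star (Matrix.trace (E (A l))) * Matrix.trace (E (A l))).re := h2
      _ = ∑ l, ‖Matrix.trace (E (A l))‖ ^ 2 :=
          Finset.sum_congr rfl fun l _ => hszre _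
  have hrow : ∑ l, ‖Liou A F k0 l‖ ^ 2 = ∑ l, ‖Liou A E k0 l‖ ^ 2 := by
    have hfa : ∀ l, Matrix.trace (F (A l)) = Matrix.trace (E (B l)) := by
      intro l
      rw [hFX]
      exact trace_conj V hV1 _
    have hLF : ∀ l, Liou A F k0 l = c * Matrix.trace (E (B l)) := by
      intro l
      show Matrix.trace ((A k0)ᴴ * F (A l)) = _
      rw [hL0, hfa]
    have hLE : ∀ l, Liou A E k0 l = c * Matrix.trace (E (A l)) := by
      intro l
      show Matrix.trace ((A k0)ᴴ * E (A l)) = _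
      rw [hL0]
    simp_rw [hLF, hLE, norm_mul, mul_pow]
    rw [← Finset.mul_sum, ← Finset.mul_sum, htrEB]
  -- piece 3 : column
  have hcol : ∑ k, ‖Liou A F k k0‖ ^ 2 = ∑ k, ‖Liou A E k k0‖ ^ 2 := by
    have h1 : ∑ k, ‖Liou A F k k0‖ ^ 2
        = (Matrix.trace ((F (A k0))ᴴ * F (A k0))).re :=
      parseval_s11 A horth hspan (F (A k0))
    have h2 : ∑ k, ‖Liou A E k k0‖ ^ 2
        = (Matrix.trace ((E (A k0))ᴴ * E (A k0))).re :=
      parseval_s11 A horth hspan (E (A k0))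
    rw [h1, h2, hFk0, trace_conj_mul V hV1]
  -- piece 4 : corner
  have hcorner : ‖Liou A F k0 k0‖ ^ 2 = ‖Liou A E k0 k0‖ ^ 2 := by
    have : Liou A F k0 k0 = Liou A E k0 k0 := by
      show Matrix.trace ((A k0)ᴴ * F (A k0)) = Matrix.trace ((A k0)ᴴ * E (A k0))
      rw [hL0, hL0, hFk0, trace_conj V hV1]
    rw [this]
  -- assemble
  unfold unitarity
  rw [split_sum k0 rfl (fun k l => ‖Liou A F k l‖ ^ 2),
    split_sum k0 rfl (fun k l => ‖Liou A E k l‖ ^ 2)]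
  rw [htotal, hrow, hcol, hcorner]
end

section
/- Let E : M_d(ℂ) → M_d(ℂ) be completely positive and trace-preserving. Then u(E) ≤ 1, with equality if and only if E is a unitary channel, i.e., there exists a unitary U ∈ U(d) such that E(ρ) = UρU† for all ρ. -/
open Matrix Kronecker ComplexOrder MeasureTheory

variable {d : ℕ}

section Aux

open Matrix ComplexOrder

/-! ### Auxiliary lemmas -/

lemma aux_trace_mul_std {d : ℕ} (M : Mat d) (i j : Fin d) :
    Matrix.trace (M * Matrix.single j i 1) = M i j := by
  simp [Matrix.trace, Matrix.diag, Matrix.mul_apply, Matrix.single, ite_and,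
    Finset.sum_ite_eq, Finset.sum_ite_eq']

lemma aux_frobSq {d : ℕ} (X : Mat d) :
    (Matrix.trace (Xᴴ * X)).re = ∑ a, ∑ b, ‖X a b‖ ^ 2 := by
  have : Matrix.trace (Xᴴ * X) = ∑ b, ∑ a, ((‖X a b‖ ^ 2 : ℝ) : ℂ) := by
    rw [Matrix.trace, Finset.sum_congr rfl]
    intro b _
    rw [Matrix.diag_apply, Matrix.mul_apply, Finset.sum_congr rfl]
    intro a _
    rw [Matrix.conjTranspose_apply, Complex.star_def, mul_comm, Complex.mul_conj']
    push_cast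
    ring
  rw [this, Finset.sum_comm]
  simp [← Complex.ofReal_pow]

lemma aux_trace_sq_herm {n : Type*} [Fintype n] (C : Matrix n n ℂ) (hC : C.IsHermitian) :
    (Matrix.trace (C * C)).re = ∑ p : n, ∑ q : n, ‖C p q‖ ^ 2 := by
  have h : ∀ p q, C q p = starRingEnd ℂ (C p q) := fun p q => by
    conv_lhs => rw [← hC]
    simp [Matrix.conjTranspose_apply]
  have : Matrix.trace (C * C) = ∑ p : n, ∑ q : n, ((‖C p q‖ ^ 2 : ℝ) : ℂ) := by
    rw [Matrix.trace, Finset.sum_congr rfl]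
    intro p _
    rw [Matrix.diag_apply, Matrix.mul_apply, Finset.sum_congr rfl]
    intro q _
    rw [h p q, Complex.mul_conj']
    push_cast
    ring
  rw [this]
  simp [← Complex.ofReal_pow]

lemma aux_psd_traces {n : Type*} [Fintype n] [DecidableEq n] (C : Matrix n n ℂ)
    (hC : C.PosSemidef) :
    Matrix.trace C = ((∑ i, hC.1.eigenvalues i : ℝ) : ℂ) ∧
    Matrix.trace (C * C) = ((∑ i, (hC.1.eigenvalues i) ^ 2 : ℝ) : ℂ) ∧
    (∀ p q, C p q = ∑ i, ((hC.1.eigenvalues i : ℂ)) *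
      (hC.1.eigenvectorUnitary : Matrix n n ℂ) p i *
      star ((hC.1.eigenvectorUnitary : Matrix n n ℂ) q i)) := by
  set V : Matrix n n ℂ := (hC.1.eigenvectorUnitary : Matrix n n ℂ) with hV
  have hU : star V * V = 1 := Matrix.mem_unitaryGroup_iff'.mp hC.1.eigenvectorUnitary.2
  set D : Matrix n n ℂ := Matrix.diagonal (RCLike.ofReal ∘ hC.1.eigenvalues) with hD
  have spec : C = V * D * star V := hC.1.spectral_theorem
  refine ⟨?_, ?_, ?_⟩
  · have h1 : C.trace = (V * D * star V).trace := by rw [← spec]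
    rw [h1, Matrix.trace_mul_cycle, hU, Matrix.one_mul, hD, Matrix.trace_diagonal]
    push_cast
    rfl
  · have h1 : C * C = V * (D * D) * star V := by
      rw [spec]
      calc V * D * star V * (V * D * star V) = V * (D * ((star V * V) * D)) * star V := by
            simp only [Matrix.mul_assoc]
          _ = V * (D * D) * star V := by rw [hU, Matrix.one_mul]
    rw [h1, Matrix.trace_mul_cycle, hU, Matrix.one_mul, hD,
      Matrix.diagonal_mul_diagonal, Matrix.trace_diagonal]
    push_cast
    simp [pow_two]
  · intro p q
    have h2 : C p q = (V * D * star V) p q := by rw [← spec]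
    rw [h2]
    simp only [Matrix.mul_apply, hD, Matrix.diagonal_apply, Matrix.star_apply, mul_ite, mul_zero,
      Finset.sum_ite_eq, Finset.mem_univ, if_true]
    refine Finset.sum_congr rfl fun j _ => ?_
    rw [Finset.sum_ite_eq' Finset.univ j (fun x => V p x * (RCLike.ofReal ∘ hC.1.eigenvalues) x)]
    simp only [Finset.mem_univ, if_true, Function.comp_apply]
    rw [mul_right_comm]
    exact (mul_rotate _ _ _).symm

lemma aux_sum_sq {n : Type*} [Fintype n] [DecidableEq n] (f : n → ℝ) (h : ∀ i, 0 ≤ f i) :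
    (∑ i, f i ^ 2) ≤ (∑ i, f i) ^ 2 ∧
      ((∑ i, f i ^ 2) = (∑ i, f i) ^ 2 → ∀ i j, i ≠ j → f i * f j = 0) := by
  have expand : (∑ i, f i) ^ 2 = (∑ i, f i ^ 2) + ∑ i, ∑ j ∈ Finset.univ.erase i, f i * f j := by
    rw [sq, Finset.sum_mul_sum, ← Finset.sum_add_distrib]
    refine Finset.sum_congr rfl fun i _ => ?_
    rw [← Finset.add_sum_erase _ _ (Finset.mem_univ i), sq]
  have hR : 0 ≤ ∑ i, ∑ j ∈ Finset.univ.erase i, f i * f j :=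
    Finset.sum_nonneg fun i _ => Finset.sum_nonneg fun j _ => mul_nonneg (h i) (h j)
  constructor
  · rw [expand]; linarith
  · intro heq i j hij
    have hz : ∑ i, ∑ j ∈ Finset.univ.erase i, f i * f j = 0 := by
      rw [expand] at heq; linarith
    have h1 := (Finset.sum_eq_zero_iff_of_nonneg
      (fun i _ => Finset.sum_nonneg fun j _ => mul_nonneg (h i) (h j))).mp hz i (Finset.mem_univ i)
    exact (Finset.sum_eq_zero_iff_of_nonneg
      (fun j _ => mul_nonneg (h i) (h j))).mp h1 j
      (Finset.mem_erase.mpr ⟨hij.symm, Finset.mem_univ j⟩)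

lemma aux_decomp {d : ℕ} (A : Fin (d ^ 2) → Mat d)
    (horth : ∀ k l : Fin (d ^ 2), Matrix.trace ((A k)ᴴ * A l) = if k = l then 1 else 0)
    (hspan : Submodule.span ℂ (Set.range A) = ⊤) (X : Mat d) :
    ∑ k, (Matrix.trace ((A k)ᴴ * X)) • A k = X := by
  have hX : X ∈ Submodule.span ℂ (Set.range A) := by rw [hspan]; trivial
  induction hX using Submodule.span_induction with
  | mem x hx =>
    obtain ⟨m, rfl⟩ := hx
    have : ∀ k, Matrix.trace ((A k)ᴴ * A m) • A k = (if k = m then (1:ℂ) else 0) • A k :=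
      fun k => by rw [horth]
    rw [Finset.sum_congr rfl fun k _ => this k]
    simp [ite_smul]
  | zero => simp
  | add x y _ _ hx hy =>
    simp only [Matrix.mul_add, Matrix.trace_add, add_smul, Finset.sum_add_distrib]
    rw [hx, hy]
  | smul c x _ hx =>
    simp only [Matrix.mul_smul, Matrix.trace_smul, smul_eq_mul, ← smul_smul]
    rw [← Finset.smul_sum, hx]

lemma aux_parseval {d : ℕ} (A : Fin (d ^ 2) → Mat d)
    (horth : ∀ k l : Fin (d ^ 2), Matrix.trace ((A k)ᴴ * A l) = if k = l then 1 else 0)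
    (hspan : Submodule.span ℂ (Set.range A) = ⊤) (X Y : Mat d) :
    Matrix.trace (Xᴴ * Y) =
      ∑ k, star (Matrix.trace ((A k)ᴴ * X)) * Matrix.trace ((A k)ᴴ * Y) := by
  conv_lhs => rw [← aux_decomp A horth hspan Y]
  rw [Matrix.mul_sum, Matrix.trace_sum]
  refine Finset.sum_congr rfl fun k _ => ?_
  rw [Matrix.mul_smul, Matrix.trace_smul, smul_eq_mul, mul_comm]
  congr 1
  rw [← Matrix.trace_conjTranspose, Matrix.conjTranspose_mul, Matrix.conjTranspose_conjTranspose]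

lemma aux_parseval_norm {d : ℕ} (A : Fin (d ^ 2) → Mat d)
    (horth : ∀ k l : Fin (d ^ 2), Matrix.trace ((A k)ᴴ * A l) = if k = l then 1 else 0)
    (hspan : Submodule.span ℂ (Set.range A) = ⊤) (X : Mat d) :
    ∑ k, ‖Matrix.trace ((A k)ᴴ * X)‖ ^ 2 = (Matrix.trace (Xᴴ * X)).re := by
  rw [aux_parseval A horth hspan X X]
  rw [Complex.re_sum]
  refine Finset.sum_congr rfl fun k _ => ?_
  rw [Complex.star_def, ← Complex.normSq_eq_conj_mul_self]
  simp [Complex.normSq_eq_norm_sq]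
  simp [← Complex.ofReal_pow]

lemma aux_EX_entry {d : ℕ} (E : Mat d →ₗ[ℂ] Mat d) (X : Mat d) (a b : Fin d) :
    E X a b = ∑ i, ∑ j, X i j * choi E (a, i) (b, j) := by
  conv_lhs => rw [Matrix.matrix_eq_sum_single X]
  rw [map_sum, Matrix.sum_apply]
  refine Finset.sum_congr rfl fun i _ => ?_
  rw [map_sum, Matrix.sum_apply]
  refine Finset.sum_congr rfl fun j _ => ?_
  have : Matrix.single i j (X i j) = X i j • Matrix.single i j 1 := by
    rw [Matrix.smul_single, smul_eq_mul, mul_one]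
  rw [this, E.map_smul (X i j) (Matrix.single i j 1), Matrix.smul_apply, smul_eq_mul]
  rfl

lemma aux_trace_choi {d : ℕ} (E : Mat d →ₗ[ℂ] Mat d) (hTP : IsTP E) :
    Matrix.trace (choi E) = (d : ℂ) := by
  rw [Matrix.trace]
  rw [Fintype.sum_prod_type]
  have : ∀ a : Fin d, ∑ i : Fin d, Matrix.diag (choi E) (a, i)
      = ∑ i : Fin d, E (Matrix.single i i 1) a a := fun a => rfl
  rw [Finset.sum_congr rfl fun a _ => this a, Finset.sum_comm]
  have : ∀ i : Fin d, ∑ a : Fin d, E (Matrix.single i i 1) a a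
      = Matrix.trace (Matrix.single i i (1:ℂ)) := by
    intro i
    rw [← hTP (Matrix.single i i 1)]
    rfl
  rw [Finset.sum_congr rfl fun i _ => this i]
  simp

lemma aux_Tsum {d : ℕ} (A : Fin (d ^ 2) → Mat d)
    (horth : ∀ k l : Fin (d ^ 2), Matrix.trace ((A k)ᴴ * A l) = if k = l then 1 else 0)
    (hspan : Submodule.span ℂ (Set.range A) = ⊤) (E : Mat d →ₗ[ℂ] Mat d) :
    ∑ k, ∑ l, ‖Liou A E k l‖ ^ 2 =
      ∑ p : Fin d × Fin d, ∑ q : Fin d × Fin d, ‖choi E p q‖ ^ 2 := by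
  set G : Fin d → Fin d → Mat d :=
    fun a b => Matrix.of fun i j => star (choi E (a, i) (b, j)) with hG
  have hGrep : ∀ (X : Mat d) (a b : Fin d),
      E X a b = Matrix.trace ((G a b)ᴴ * X) := by
    intro X a b
    rw [aux_EX_entry E X a b, Matrix.trace, Finset.sum_comm]
    refine Finset.sum_congr rfl fun i _ => ?_
    rw [Matrix.diag_apply, Matrix.mul_apply]
    refine Finset.sum_congr rfl fun j _ => ?_
    simp [hG, Matrix.conjTranspose_apply, mul_comm]
  calc ∑ k, ∑ l, ‖Liou A E k l‖ ^ 2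
      = ∑ l, ∑ k, ‖Matrix.trace ((A k)ᴴ * E (A l))‖ ^ 2 := by
        rw [Finset.sum_comm]; rfl
    _ = ∑ l, ∑ a, ∑ b, ‖(E (A l)) a b‖ ^ 2 := by
        refine Finset.sum_congr rfl fun l _ => ?_
        rw [aux_parseval_norm A horth hspan (E (A l)), aux_frobSq]
    _ = ∑ a, ∑ b, ∑ l, ‖(E (A l)) a b‖ ^ 2 := by
        rw [Finset.sum_comm]
        exact Finset.sum_congr rfl fun a _ => Finset.sum_comm
    _ = ∑ a, ∑ b, ∑ i, ∑ j, ‖choi E (a, i) (b, j)‖ ^ 2 := by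
        refine Finset.sum_congr rfl fun a _ => Finset.sum_congr rfl fun b _ => ?_
        have : ∀ l, ‖(E (A l)) a b‖ ^ 2 = ‖Matrix.trace ((A l)ᴴ * G a b)‖ ^ 2 := by
          intro l
          rw [hGrep (A l) a b]
          have h1 : ((G a b)ᴴ * A l)ᴴ = (A l)ᴴ * G a b := by
            rw [Matrix.conjTranspose_mul, Matrix.conjTranspose_conjTranspose]
          rw [← h1, Matrix.trace_conjTranspose, norm_star]
        rw [Finset.sum_congr rfl fun l _ => this l, aux_parseval_norm A horth hspan (G a b),
          aux_frobSq]
        refine Finset.sum_congr rfl fun i _ => Finset.sum_congr rfl fun j _ => ?_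
        simp [hG]
    _ = ∑ p : Fin d × Fin d, ∑ q : Fin d × Fin d, ‖choi E p q‖ ^ 2 := by
        rw [Fintype.sum_prod_type]
        refine Finset.sum_congr rfl fun a _ => ?_
        rw [Finset.sum_comm]
        refine Finset.sum_congr rfl fun i _ => ?_
        rw [Fintype.sum_prod_type]

end Aux

/-- For CPTP `E`, `u(E) ≤ 1`, with equality iff `E` is a unitary
channel `ρ ↦ UρU†`. -/
theorem statement_12 (d : ℕ) (hd : 2 ≤ d)
    (A : Fin (d ^ 2) → Mat d)
    (horth : ∀ k l : Fin (d ^ 2), Matrix.trace ((A k)ᴴ * A l) = if k = l then 1 else 0)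
    (hspan : Submodule.span ℂ (Set.range A) = ⊤)
    (hA0 : ∀ k : Fin (d ^ 2), (k : ℕ) = 0 → A k = ((Real.sqrt d : ℝ) : ℂ)⁻¹ • 1)
    (E : Mat d →ₗ[ℂ] Mat d) (hCP : IsCP E) (hTP : IsTP E) :
    unitarity A E ≤ 1 ∧
      (unitarity A E = 1 ↔
        ∃ U ∈ Matrix.unitaryGroup (Fin d) ℂ, ∀ ρ : Mat d, E ρ = U * ρ * Uᴴ) := by
  classical
  have hd2 : (2:ℝ) ≤ (d:ℝ) := by exact_mod_cast hd
  have hden : (0:ℝ) < (d:ℝ)^2 - 1 := by nlinarith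
  have hdpos : 0 < d ^ 2 := by positivity
  set k0 : Fin (d^2) := ⟨0, hdpos⟩ with hk0def
  have hval : ∀ k : Fin (d^2), (k:ℕ) = 0 ↔ k = k0 := fun k =>
    ⟨fun h => Fin.ext h, fun h => by rw [h]⟩
  have hset1 : Finset.univ.filter (fun k : Fin (d^2) => (k:ℕ) ≠ 0) = Finset.univ.erase k0 := by
    ext k
    simp [hval k, Finset.mem_erase]
  -- basic facts about the first basis element
  have hAk0 : A k0 = ((Real.sqrt d : ℝ) : ℂ)⁻¹ • 1 := hA0 k0 rfl
  have htr0 : ∀ M : Mat d, Matrix.trace ((A k0)ᴴ * M)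
      = ((Real.sqrt d : ℝ) : ℂ)⁻¹ * Matrix.trace M := by
    intro M
    rw [hAk0]
    rw [Matrix.conjTranspose_smul, Matrix.conjTranspose_one]
    rw [Matrix.smul_mul, Matrix.one_mul, Matrix.trace_smul]
    congr 1
    simp [Complex.star_def, ← Complex.ofReal_inv, Complex.conj_ofReal]
  have hrow : ∀ l, Liou A E k0 l = if k0 = l then 1 else 0 := by
    intro l
    have h1 : Liou A E k0 l = Matrix.trace ((A k0)ᴴ * A l) := by
      show Matrix.trace ((A k0)ᴴ * E (A l)) = _
      rw [htr0, htr0, hTP (A l)]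
    rw [h1, horth]
  -- the three sums
  set T : ℝ := ∑ k, ∑ l, ‖Liou A E k l‖^2 with hT
  set Nu : ℝ := ∑ k ∈ Finset.univ.erase k0, ∑ l ∈ Finset.univ.erase k0, ‖Liou A E k l‖^2
    with hNu
  set N0 : ℝ := ∑ k ∈ Finset.univ.erase k0, ‖Liou A E k k0‖^2 with hN0def
  have hrow_sum : ∑ l, ‖Liou A E k0 l‖^2 = 1 := by
    have : ∀ l, ‖Liou A E k0 l‖^2 = if k0 = l then 1 else 0 := by
      intro l
      rw [hrow l]
      by_cases h : k0 = l <;> simp [h]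
    rw [Finset.sum_congr rfl fun l _ => this l, Finset.sum_ite_eq]
    simp
  have hsplit : T = 1 + N0 + Nu := by
    rw [hT, ← Finset.add_sum_erase _ _ (Finset.mem_univ k0), hrow_sum]
    have : ∀ k, ∑ l, ‖Liou A E k l‖^2
        = ‖Liou A E k k0‖^2 + ∑ l ∈ Finset.univ.erase k0, ‖Liou A E k l‖^2 :=
      fun k => (Finset.add_sum_erase _ _ (Finset.mem_univ k0)).symm
    rw [Finset.sum_congr rfl fun k _ => this k, Finset.sum_add_distrib, hNu, hN0def]
    ring
  have hNu_unit : unitarity A E = Nu / ((d:ℝ)^2 - 1) := by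
    rw [unitarity, hset1, hNu]
  -- spectral analysis of the Choi matrix
  obtain ⟨htr1, htr2, hent⟩ := aux_psd_traces (choi E) hCP
  set lam : Fin d × Fin d → ℝ := hCP.1.eigenvalues with hlam
  have hlamsum : ∑ i, lam i = (d:ℝ) := by
    have h1 := aux_trace_choi E hTP
    rw [htr1] at h1
    exact_mod_cast h1
  have hlam_nonneg : ∀ i, 0 ≤ lam i := hCP.eigenvalues_nonneg
  have hTeq : T = ∑ i, lam i ^ 2 := by
    rw [hT, aux_Tsum A horth hspan E, ← aux_trace_sq_herm (choi E) hCP.1, htr2]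
    simp [← Complex.ofReal_pow]
  obtain ⟨hineq, heqcase⟩ := aux_sum_sq lam hlam_nonneg
  have hTle : T ≤ (d:ℝ)^2 := by
    rw [hTeq]
    calc ∑ i, lam i ^ 2 ≤ (∑ i, lam i)^2 := hineq
      _ = (d:ℝ)^2 := by rw [hlamsum]
  have hN0nn : 0 ≤ N0 :=
    Finset.sum_nonneg fun k _ => by positivity
  have hNunn : 0 ≤ Nu :=
    Finset.sum_nonneg fun k _ => Finset.sum_nonneg fun l _ => by positivity
  refine ⟨?_, ?_, ?_⟩
  · rw [hNu_unit, div_le_one hden]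
    linarith
  · -- equality implies unitary channel
    intro h1
    rw [hNu_unit, div_eq_one_iff_eq hden.ne'] at h1
    have hTeq2 : T = (d:ℝ)^2 := by linarith
    have hcross := heqcase (by rw [← hTeq, hlamsum, hTeq2])
    have hex : ∃ m, lam m ≠ 0 := by
      by_contra hcon
      push_neg at hcon
      have : ∑ i, lam i = 0 := Finset.sum_eq_zero fun i _ => hcon i
      rw [hlamsum] at this
      have : (2:ℝ) ≤ 0 := by linarith
      linarith
    obtain ⟨m, hm⟩ := hex
    have hzero : ∀ i, i ≠ m → lam i = 0 := fun i hi =>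
      (mul_eq_zero.mp (hcross i m hi)).resolve_right hm
    set V : Matrix (Fin d × Fin d) (Fin d × Fin d) ℂ :=
      (hCP.1.eigenvectorUnitary : Matrix (Fin d × Fin d) (Fin d × Fin d) ℂ) with hV
    set w : Fin d × Fin d → ℂ := fun p => ((Real.sqrt (lam m) : ℝ) : ℂ) * V p m with hw
    have hCw : ∀ p q, choi E p q = w p * star (w q) := by
      intro p q
      rw [hent p q]
      rw [Finset.sum_eq_single m]
      · rw [hw]
        simp only [star_mul']
        have hsr : star (((Real.sqrt (lam m) : ℝ)) : ℂ) = ((Real.sqrt (lam m) : ℝ) : ℂ) := by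
          rw [Complex.star_def, Complex.conj_ofReal]
        rw [hsr]
        have hss : (((Real.sqrt (lam m) : ℝ)) : ℂ) * ((Real.sqrt (lam m) : ℝ) : ℂ)
            = ((lam m : ℝ) : ℂ) := by
          rw [← Complex.ofReal_mul, Real.mul_self_sqrt (hlam_nonneg m)]
        calc ((lam m : ℝ) : ℂ) * V p m * star (V q m)
            = (((Real.sqrt (lam m) : ℝ)) : ℂ) * ((Real.sqrt (lam m) : ℝ) : ℂ)
              * V p m * star (V q m) := by rw [hss]
          _ = ((Real.sqrt (lam m) : ℝ) : ℂ) * V p m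
              * (((Real.sqrt (lam m) : ℝ)) : ℂ) * star (V q m) := by ring
          _ = _ := by ring
      · intro i _ hi
        rw [hzero i hi]
        simp
      · intro h
        exact absurd (Finset.mem_univ m) h
    set K : Mat d := Matrix.of fun a i => w (a, i) with hK
    have hEK : ∀ X : Mat d, E X = K * X * Kᴴ := by
      intro X
      ext a b
      rw [aux_EX_entry E X a b]
      have hRHS : (K * X * Kᴴ) a b = ∑ j, (∑ i, K a i * X i j) * star (K b j) := by
        simp [Matrix.mul_apply, Matrix.conjTranspose_apply]
      rw [hRHS, Finset.sum_comm]
      refine Finset.sum_congr rfl fun j _ => ?_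
      rw [Finset.sum_mul]
      refine Finset.sum_congr rfl fun i _ => ?_
      rw [hCw (a, i) (b, j)]
      have : K a i = w (a, i) := rfl
      have h2 : K b j = w (b, j) := rfl
      rw [this, h2]
      ring
    have hKK : Kᴴ * K = 1 := by
      ext i j
      have h3 := hTP (Matrix.single j i 1)
      rw [hEK, Matrix.trace_mul_cycle, aux_trace_mul_std] at h3
      rw [h3]
      rcases eq_or_ne i j with h | h
      · subst h
        simp [Matrix.one_apply]
      · rw [Matrix.trace_single_eq_of_ne j i (1:ℂ) h.symm, Matrix.one_apply_ne h]
    refine ⟨K, Matrix.mem_unitaryGroup_iff'.mpr ?_, fun ρ => hEK ρ⟩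
    exact hKK
  · -- unitary channel implies equality
    rintro ⟨U, hUmem, hU⟩
    have hsUU : Uᴴ * U = 1 := Matrix.mem_unitaryGroup_iff'.mp hUmem
    have hUUs : U * Uᴴ = 1 := Matrix.mem_unitaryGroup_iff.mp hUmem
    have hchoi : ∀ p q : Fin d × Fin d, choi E p q = U p.1 p.2 * star (U q.1 q.2) := by
      rintro ⟨a, i⟩ ⟨b, j⟩
      show E (Matrix.single i j 1) a b = _
      rw [hU]
      simp [Matrix.mul_apply, Matrix.single, Matrix.conjTranspose_apply, ite_and,
        Finset.sum_ite_eq, Finset.sum_ite_eq', mul_comm]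
    have hUsum : ∑ p : Fin d × Fin d, ‖U p.1 p.2‖^2 = (d:ℝ) := by
      have h4 := aux_frobSq U
      rw [hsUU] at h4
      rw [Fintype.sum_prod_type, ← h4]
      simp [Matrix.trace_one]
    have hTval : T = (d:ℝ)^2 := by
      rw [hT, aux_Tsum A horth hspan E]
      have : ∀ p q : Fin d × Fin d, ‖choi E p q‖^2 = ‖U p.1 p.2‖^2 * ‖U q.1 q.2‖^2 := by
        intro p q
        rw [hchoi p q, norm_mul, norm_star, mul_pow]
      rw [Finset.sum_congr rfl fun p _ => Finset.sum_congr rfl fun q _ => this p q]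
      rw [← Finset.sum_mul_sum, hUsum]
      ring
    have hE1 : E (A k0) = A k0 := by
      rw [hAk0, E.map_smul, hU 1, Matrix.mul_one, hUUs]
    have hN0z : N0 = 0 := by
      rw [hN0def]
      refine Finset.sum_eq_zero fun k hk => ?_
      have hkne : k ≠ k0 := Finset.ne_of_mem_erase hk
      have : Liou A E k k0 = 0 := by
        show Matrix.trace ((A k)ᴴ * E (A k0)) = 0
        rw [hE1, horth, if_neg hkne]
      rw [this]
      simp
    have hNuval : Nu = (d:ℝ)^2 - 1 := by linarith
    rw [hNu_unit, hNuval, div_self hden.ne']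
end

section
/- For any linear map E : M_d(ℂ) → M_d(ℂ), the purity of its Jamiołkowski state satisfies d² Tr[J(E)† J(E)] = S(E)² + ‖𝓔_sdl‖² + ‖𝓔_n‖² + (d²−1) u(E), where J(E) = (E ⊗ id)(Φ) and Φ = (1/d) ∑_{j,k=1}^{d} |jj⟩⟨kk| is the maximally entangled state on ℂ^d ⊗ ℂ^d. -/
open Matrix Kronecker ComplexOrder MeasureTheory

variable {d : ℕ}

/-- The maximally entangled state `Φ = (1/d) ∑_{j,k} |jj⟩⟨kk|`. -/
noncomputable def Phi (d : ℕ) : Mat2 d :=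
  Matrix.of fun p q => if p.1 = p.2 ∧ q.1 = q.2 then ((d : ℂ))⁻¹ else 0

/-- The Jamiołkowski state `J(E) = (E ⊗ id)(Φ)`. -/
noncomputable def Jam (E : Mat d →ₗ[ℂ] Mat d) : Mat2 d :=
  tensorMap E LinearMap.id (Phi d)


section Aux

variable {d : ℕ}

/-- An equivalence between matrix positions and basis indices. -/
noncomputable def eqvS15 (d : ℕ) : Fin d × Fin d ≃ Fin (d ^ 2) :=
  finProdFinEquiv.trans (finCongr (by rw [sq]))

lemma trace_conjTranspose_mul' {n : Type*} [Fintype n] (X Y : Matrix n n ℂ) :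
    Matrix.trace (Xᴴ * Y) = ∑ p : n × n, (starRingEnd ℂ) (X p.1 p.2) * Y p.1 p.2 := by
  rw [Fintype.sum_prod_type]
  simp only [Matrix.trace, Matrix.mul_apply, Matrix.conjTranspose_apply, Matrix.diag]
  exact Finset.sum_comm

lemma complete_rel (A : Fin (d ^ 2) → Mat d)
    (horth : ∀ k l : Fin (d ^ 2), Matrix.trace ((A k)ᴴ * A l) = if k = l then 1 else 0)
    (p q : Fin d × Fin d) :
    ∑ k : Fin (d ^ 2), (starRingEnd ℂ) (A k p.1 p.2) * A k q.1 q.2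
      = if p = q then 1 else 0 := by
  set e := eqvS15 d with he
  set G : Matrix (Fin (d ^ 2)) (Fin (d ^ 2)) ℂ :=
    Matrix.of fun k l => A k (e.symm l).1 (e.symm l).2 with hG
  have hGG : G * Gᴴ = 1 := by
    ext k l
    have h := horth k l
    rw [trace_conjTranspose_mul'] at h
    simp only [Matrix.mul_apply, Matrix.conjTranspose_apply, hG, Matrix.of_apply]
    have h1 : ∑ m, A k (e.symm m).1 (e.symm m).2 * star (A l (e.symm m).1 (e.symm m).2)
        = ∑ p : Fin d × Fin d, A k p.1 p.2 * star (A l p.1 p.2) :=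
      Equiv.sum_comp e.symm (fun p => A k p.1 p.2 * star (A l p.1 p.2))
    rw [h1]
    have h2 : ∑ p : Fin d × Fin d, A k p.1 p.2 * star (A l p.1 p.2)
        = (starRingEnd ℂ) (∑ p : Fin d × Fin d, (starRingEnd ℂ) (A k p.1 p.2) * A l p.1 p.2) := by
      rw [map_sum]
      refine Finset.sum_congr rfl fun p _ => ?_
      simp [mul_comm]
    rw [h2, h, Matrix.one_apply]
    split <;> simp
  have h2 : Gᴴ * G = 1 := mul_eq_one_comm.mp hGG
  have h3 : (Gᴴ * G) (e p) (e q) = (1 : Matrix (Fin (d ^ 2)) (Fin (d ^ 2)) ℂ) (e p) (e q) := by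
    rw [h2]
  simp only [Matrix.mul_apply, Matrix.conjTranspose_apply, hG, Matrix.of_apply,
    Equiv.symm_apply_apply, Matrix.one_apply] at h3
  simp only [EmbeddingLike.apply_eq_iff_eq] at h3
  exact h3

lemma keyS15 (A : Fin (d ^ 2) → Mat d)
    (horth : ∀ k l : Fin (d ^ 2), Matrix.trace ((A k)ᴴ * A l) = if k = l then 1 else 0)
    (f : Fin d × Fin d → ℂ) :
    ∑ k : Fin (d ^ 2),
      (∑ p : Fin d × Fin d, (starRingEnd ℂ) (A k p.1 p.2) * f p) *
        (starRingEnd ℂ) (∑ p : Fin d × Fin d, (starRingEnd ℂ) (A k p.1 p.2) * f p)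
      = ∑ p : Fin d × Fin d, f p * (starRingEnd ℂ) (f p) := by
  have step : ∀ k : Fin (d ^ 2),
      (∑ p : Fin d × Fin d, (starRingEnd ℂ) (A k p.1 p.2) * f p) *
        (starRingEnd ℂ) (∑ p : Fin d × Fin d, (starRingEnd ℂ) (A k p.1 p.2) * f p)
      = ∑ p : Fin d × Fin d, ∑ q : Fin d × Fin d,
          (f p * (starRingEnd ℂ) (f q)) * ((starRingEnd ℂ) (A k p.1 p.2) * A k q.1 q.2) := by
    intro k
    rw [map_sum, Finset.sum_mul_sum]
    refine Finset.sum_congr rfl fun p _ => Finset.sum_congr rfl fun q _ => ?_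
    simp only [_root_.map_mul, Complex.conj_conj]
    ring
  rw [Finset.sum_congr rfl fun k _ => step k, Finset.sum_comm]
  refine Finset.sum_congr rfl fun p _ => ?_
  rw [Finset.sum_comm]
  simp_rw [← Finset.mul_sum]
  rw [Finset.sum_congr rfl fun q _ => by rw [complete_rel A horth p q]]
  simp [Finset.sum_ite_eq, mul_ite]

lemma keyS15' (A : Fin (d ^ 2) → Mat d)
    (horth : ∀ k l : Fin (d ^ 2), Matrix.trace ((A k)ᴴ * A l) = if k = l then 1 else 0)
    (g : Fin d × Fin d → ℂ) :
    ∑ k : Fin (d ^ 2),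
      (∑ p : Fin d × Fin d, A k p.1 p.2 * g p) *
        (starRingEnd ℂ) (∑ p : Fin d × Fin d, A k p.1 p.2 * g p)
      = ∑ p : Fin d × Fin d, g p * (starRingEnd ℂ) (g p) := by
  have h := keyS15 A horth (fun p => (starRingEnd ℂ) (g p))
  have e1 : ∀ k : Fin (d ^ 2),
      (∑ p : Fin d × Fin d, (starRingEnd ℂ) (A k p.1 p.2) * (starRingEnd ℂ) (g p))
      = (starRingEnd ℂ) (∑ p : Fin d × Fin d, A k p.1 p.2 * g p) := by
    intro k
    rw [map_sum]
    exact Finset.sum_congr rfl fun p _ => (_root_.map_mul _ _ _).symm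
  simp only [e1, Complex.conj_conj] at h
  calc ∑ k : Fin (d ^ 2),
        (∑ p : Fin d × Fin d, A k p.1 p.2 * g p) *
          (starRingEnd ℂ) (∑ p : Fin d × Fin d, A k p.1 p.2 * g p)
      = ∑ k : Fin (d ^ 2),
        (starRingEnd ℂ) (∑ p : Fin d × Fin d, A k p.1 p.2 * g p) *
          (∑ p : Fin d × Fin d, A k p.1 p.2 * g p) := by
        exact Finset.sum_congr rfl fun k _ => mul_comm _ _
    _ = ∑ p : Fin d × Fin d, (starRingEnd ℂ) (g p) * g p := h
    _ = ∑ p : Fin d × Fin d, g p * (starRingEnd ℂ) (g p) :=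
        Finset.sum_congr rfl fun p _ => mul_comm _ _

lemma apply_entry_eq_sum (E : Mat d →ₗ[ℂ] Mat d) (X : Mat d) (v : Fin d × Fin d) :
    E X v.1 v.2
      = ∑ w : Fin d × Fin d, X w.1 w.2 * (E (Matrix.single w.1 w.2 1)) v.1 v.2 := by
  have hX : X = ∑ w : Fin d × Fin d, X w.1 w.2 • Matrix.single w.1 w.2 (1 : ℂ) := by
    rw [Fintype.sum_prod_type]
    conv_lhs => rw [Matrix.matrix_eq_sum_single X]
    refine Finset.sum_congr rfl fun i _ => Finset.sum_congr rfl fun j _ => ?_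
    rw [Matrix.smul_single, smul_eq_mul, mul_one]
  conv_lhs => rw [hX, map_sum]
  simp only [_root_.map_smul]
  simp [Matrix.sum_apply, smul_eq_mul]

lemma jam_apply (E : Mat d →ₗ[ℂ] Mat d) (p q : Fin d × Fin d) :
    Jam E p q = (d : ℂ)⁻¹ * E (Matrix.single p.2 q.2 1) p.1 q.1 := by
  simp only [Jam, tensorMap, Phi, LinearMap.coe_mk, AddHom.coe_mk, Matrix.of_apply,
    LinearMap.id_coe, id_eq, Matrix.single, ite_mul, zero_mul, one_mul,
    mul_ite, mul_zero, mul_one, ite_and]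
  simp [Finset.sum_ite_eq, Finset.sum_ite_eq']

lemma liou_entry (A : Fin (d ^ 2) → Mat d) (E : Mat d →ₗ[ℂ] Mat d) (k l : Fin (d ^ 2)) :
    Liou A E k l = ∑ p : Fin d × Fin d, (starRingEnd ℂ) (A k p.1 p.2) * (E (A l)) p.1 p.2 := by
  simp only [Liou, Matrix.of_apply]
  exact trace_conjTranspose_mul' _ _

lemma liou_sum (A : Fin (d ^ 2) → Mat d)
    (horth : ∀ k l : Fin (d ^ 2), Matrix.trace ((A k)ᴴ * A l) = if k = l then 1 else 0)
    (E : Mat d →ₗ[ℂ] Mat d) :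
    ∑ k : Fin (d ^ 2), ∑ l : Fin (d ^ 2), Liou A E k l * (starRingEnd ℂ) (Liou A E k l)
      = ∑ v : Fin d × Fin d, ∑ w : Fin d × Fin d,
          E (Matrix.single w.1 w.2 1) v.1 v.2 *
            (starRingEnd ℂ) (E (Matrix.single w.1 w.2 1) v.1 v.2) := by
  rw [Finset.sum_comm]
  calc ∑ l : Fin (d ^ 2), ∑ k : Fin (d ^ 2),
        Liou A E k l * (starRingEnd ℂ) (Liou A E k l)
      = ∑ l : Fin (d ^ 2), ∑ v : Fin d × Fin d,
          (E (A l)) v.1 v.2 * (starRingEnd ℂ) ((E (A l)) v.1 v.2) := by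
        refine Finset.sum_congr rfl fun l _ => ?_
        simp_rw [liou_entry]
        exact keyS15 A horth (fun p => (E (A l)) p.1 p.2)
    _ = ∑ v : Fin d × Fin d, ∑ l : Fin (d ^ 2),
          (E (A l)) v.1 v.2 * (starRingEnd ℂ) ((E (A l)) v.1 v.2) := Finset.sum_comm
    _ = ∑ v : Fin d × Fin d, ∑ w : Fin d × Fin d,
          E (Matrix.single w.1 w.2 1) v.1 v.2 *
            (starRingEnd ℂ) (E (Matrix.single w.1 w.2 1) v.1 v.2) := by
        refine Finset.sum_congr rfl fun v _ => ?_
        simp_rw [apply_entry_eq_sum E (A _) v]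
        exact keyS15' A horth (fun w => E (Matrix.single w.1 w.2 1) v.1 v.2)

lemma trace_jam (hd0 : (d : ℂ) ≠ 0) (E : Mat d →ₗ[ℂ] Mat d) :
    (d : ℂ) ^ 2 * Matrix.trace ((Jam E)ᴴ * Jam E)
      = ∑ v : Fin d × Fin d, ∑ w : Fin d × Fin d,
          E (Matrix.single w.1 w.2 1) v.1 v.2 *
            (starRingEnd ℂ) (E (Matrix.single w.1 w.2 1) v.1 v.2) := by
  rw [trace_conjTranspose_mul', Finset.mul_sum]
  calc ∑ p : (Fin d × Fin d) × (Fin d × Fin d),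
        (d : ℂ) ^ 2 * ((starRingEnd ℂ) (Jam E p.1 p.2) * Jam E p.1 p.2)
      = ∑ p : (Fin d × Fin d) × (Fin d × Fin d),
          E (Matrix.single p.1.2 p.2.2 1) p.1.1 p.2.1 *
            (starRingEnd ℂ) (E (Matrix.single p.1.2 p.2.2 1) p.1.1 p.2.1) := by
        refine Finset.sum_congr rfl fun p _ => ?_
        rw [jam_apply, _root_.map_mul, map_inv₀, Complex.conj_natCast]
        field_simp
    _ = ∑ v : Fin d × Fin d, ∑ w : Fin d × Fin d,
          E (Matrix.single w.1 w.2 1) v.1 v.2 *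
            (starRingEnd ℂ) (E (Matrix.single w.1 w.2 1) v.1 v.2) := by
        simp only [Fintype.sum_prod_type]
        refine Finset.sum_congr rfl fun a _ => ?_
        exact Finset.sum_comm


end Aux

/-- For any linear map `E`,
`d² Tr[J(E)† J(E)] = S(E)² + ‖𝓔_sdl‖² + ‖𝓔ₙ‖² + (d²−1) u(E)`. -/
theorem statement_15 (d : ℕ) (hd : 2 ≤ d)
    (A : Fin (d ^ 2) → Mat d)
    (horth : ∀ k l : Fin (d ^ 2), Matrix.trace ((A k)ᴴ * A l) = if k = l then 1 else 0)
    (hspan : Submodule.span ℂ (Set.range A) = ⊤)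
    (hA0 : ∀ k : Fin (d ^ 2), (k : ℕ) = 0 → A k = ((Real.sqrt d : ℝ) : ℂ)⁻¹ • 1)
    (E : Mat d →ₗ[ℂ] Mat d) :
    (d : ℝ) ^ 2 * (Matrix.trace ((Jam E)ᴴ * Jam E)).re
      = ‖Matrix.trace (E 1) / (d : ℂ)‖ ^ 2 + sdlSq A E + nSq A E
        + ((d : ℝ) ^ 2 - 1) * unitarity A E := by
  have hdpos : 0 < d := lt_of_lt_of_le two_pos hd
  have hd0 : (d : ℂ) ≠ 0 := Nat.cast_ne_zero.mpr hdpos.ne'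
  have hdR : (2 : ℝ) ≤ (d : ℝ) := by exact_mod_cast hd
  have h1 : ((d : ℝ) ^ 2 - 1) ≠ 0 := by nlinarith
  set k0 : Fin (d ^ 2) := ⟨0, pow_pos hdpos 2⟩ with hk0
  set S : Finset (Fin (d ^ 2)) :=
    Finset.univ.filter (fun k : Fin (d ^ 2) => (k : ℕ) ≠ 0) with hS
  have hf0 : Finset.univ.filter (fun k : Fin (d ^ 2) => (k : ℕ) = 0) = {k0} := by
    ext k
    simp [hk0, Fin.ext_iff]
  have hsplit : ∀ f : Fin (d ^ 2) → ℝ,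
      ∑ k : Fin (d ^ 2), f k = f k0 + ∑ k ∈ S, f k := by
    intro f
    rw [← Finset.sum_filter_add_sum_filter_not Finset.univ
      (fun k : Fin (d ^ 2) => (k : ℕ) = 0) f, hf0, Finset.sum_singleton]
  -- the complex identity
  have hC : ∑ k : Fin (d ^ 2), ∑ l : Fin (d ^ 2),
      Liou A E k l * (starRingEnd ℂ) (Liou A E k l)
      = (d : ℂ) ^ 2 * Matrix.trace ((Jam E)ᴴ * Jam E) :=
    (liou_sum A horth E).trans (trace_jam hd0 E).symm
  have hz : ∀ z : ℂ, (z * (starRingEnd ℂ) z).re = ‖z‖ ^ 2 := by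
    intro z
    rw [Complex.mul_conj]
    simp [Complex.normSq_eq_norm_sq, ← Complex.ofReal_pow]
  have hre : (d : ℝ) ^ 2 * (Matrix.trace ((Jam E)ᴴ * Jam E)).re
      = ∑ k : Fin (d ^ 2), ∑ l : Fin (d ^ 2), ‖Liou A E k l‖ ^ 2 := by
    have h2 : ((d : ℂ) ^ 2 * Matrix.trace ((Jam E)ᴴ * Jam E)).re
        = (d : ℝ) ^ 2 * (Matrix.trace ((Jam E)ᴴ * Jam E)).re := by
      rw [show ((d : ℂ)) ^ 2 = ((((d : ℝ) ^ 2 : ℝ)) : ℂ) by push_cast; ring,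
        Complex.re_ofReal_mul]
    rw [← h2, ← hC, Complex.re_sum]
    refine Finset.sum_congr rfl fun k _ => ?_
    rw [Complex.re_sum]
    exact Finset.sum_congr rfl fun l _ => hz _
  -- the value of the (0,0) entry
  have hL00 : Liou A E k0 k0 = Matrix.trace (E 1) / (d : ℂ) := by
    have hA := hA0 k0 rfl
    simp only [Liou, Matrix.of_apply, hA, Matrix.conjTranspose_smul, Matrix.conjTranspose_one,
      _root_.map_smul, Matrix.smul_mul, Matrix.mul_smul, Matrix.one_mul, Matrix.trace_smul,
      smul_eq_mul, map_inv₀, Complex.conj_ofReal]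
    rw [star_inv₀, show star ((Real.sqrt d : ℝ) : ℂ) = ((Real.sqrt d : ℝ) : ℂ) from by
        rw [Complex.star_def, Complex.conj_ofReal]]
    rw [← mul_assoc, ← mul_inv, ← Complex.ofReal_mul, Real.mul_self_sqrt (by positivity),
      div_eq_mul_inv, mul_comm, Complex.ofReal_natCast]
  -- block decomposition
  have hsdl : sdlSq A E = ∑ l ∈ S, ‖Liou A E k0 l‖ ^ 2 := by
    rw [sdlSq, hf0, Finset.sum_singleton]
  have hn : nSq A E = ∑ k ∈ S, ‖Liou A E k k0‖ ^ 2 := by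
    rw [nSq]
    refine Finset.sum_congr rfl fun k _ => ?_
    rw [hf0, Finset.sum_singleton]
  have hu : ((d : ℝ) ^ 2 - 1) * unitarity A E
      = ∑ k ∈ S, ∑ l ∈ S, ‖Liou A E k l‖ ^ 2 := by
    rw [unitarity]
    field_simp
    rfl
  rw [hre, hsdl, hn, hu, ← hL00]
  calc ∑ k : Fin (d ^ 2), ∑ l : Fin (d ^ 2), ‖Liou A E k l‖ ^ 2
      = ∑ k : Fin (d ^ 2), (‖Liou A E k k0‖ ^ 2 + ∑ l ∈ S, ‖Liou A E k l‖ ^ 2) :=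
        Finset.sum_congr rfl fun k _ => hsplit _
    _ = (∑ k : Fin (d ^ 2), ‖Liou A E k k0‖ ^ 2)
          + ∑ k : Fin (d ^ 2), ∑ l ∈ S, ‖Liou A E k l‖ ^ 2 := Finset.sum_add_distrib
    _ = (‖Liou A E k0 k0‖ ^ 2 + ∑ k ∈ S, ‖Liou A E k k0‖ ^ 2)
          + ((∑ l ∈ S, ‖Liou A E k0 l‖ ^ 2) + ∑ k ∈ S, ∑ l ∈ S, ‖Liou A E k l‖ ^ 2) := by
        rw [hsplit (fun k => ‖Liou A E k k0‖ ^ 2),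
          hsplit (fun k => ∑ l ∈ S, ‖Liou A E k l‖ ^ 2)]
    _ = ‖Liou A E k0 k0‖ ^ 2 + (∑ l ∈ S, ‖Liou A E k0 l‖ ^ 2)
          + (∑ k ∈ S, ‖Liou A E k k0‖ ^ 2) + ∑ k ∈ S, ∑ l ∈ S, ‖Liou A E k l‖ ^ 2 := by
        ring
end

section
/- Let E, F : M_d(ℂ) → M_d(ℂ) be trace-preserving linear maps such that the largest singular value of the unital block 𝓔_u is at most 1 (equivalently, the operator norm ‖𝓔_u‖_op ≤ 1). Then the unitarity is monotone under post-composition by E: u(E ∘ F) ≤ u(F). -/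
open Matrix Kronecker ComplexOrder MeasureTheory

variable {d : ℕ}

lemma expand_basis (A : Fin (d ^ 2) → Mat d)
    (horth : ∀ k l : Fin (d ^ 2), Matrix.trace ((A k)ᴴ * A l) = if k = l then 1 else 0)
    (hspan : Submodule.span ℂ (Set.range A) = ⊤) (X : Mat d) :
    X = ∑ m, Matrix.trace ((A m)ᴴ * X) • A m := by
  have hX : X ∈ Submodule.span ℂ (Set.range A) := hspan ▸ Submodule.mem_top
  induction hX using Submodule.span_induction with
  | mem x hx =>
      obtain ⟨l, rfl⟩ := hx
      simp only [horth]
      rw [Finset.sum_congr rfl (fun m _ => by rw [ite_smul, one_smul, zero_smul])]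
      simp
  | zero => simp
  | add x y hx hy ihx ihy =>
      calc x + y = (∑ m, Matrix.trace ((A m)ᴴ * x) • A m)
            + ∑ m, Matrix.trace ((A m)ᴴ * y) • A m := by rw [← ihx, ← ihy]
        _ = _ := by
            rw [← Finset.sum_add_distrib]
            exact Finset.sum_congr rfl fun m _ => by
              rw [mul_add, Matrix.trace_add, add_smul]
  | smul c x hx ih =>
      calc c • x = c • ∑ m, Matrix.trace ((A m)ᴴ * x) • A m := by rw [← ih]
        _ = _ := by
            rw [Finset.smul_sum]
            exact Finset.sum_congr rfl fun m _ => by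
              simp [mul_smul_comm, Matrix.trace_smul, smul_smul]

lemma Liou_comp (A : Fin (d ^ 2) → Mat d)
    (horth : ∀ k l : Fin (d ^ 2), Matrix.trace ((A k)ᴴ * A l) = if k = l then 1 else 0)
    (hspan : Submodule.span ℂ (Set.range A) = ⊤) (E F : Mat d →ₗ[ℂ] Mat d)
    (k l : Fin (d ^ 2)) :
    Liou A (E ∘ₗ F) k l = ∑ m, Liou A E k m * Liou A F m l := by
  simp only [Liou, Matrix.of_apply, LinearMap.comp_apply]
  conv_lhs => rw [expand_basis A horth hspan (F (A l))]
  rw [map_sum, Finset.mul_sum, Matrix.trace_sum]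
  exact Finset.sum_congr rfl fun m _ => by
    rw [E.map_smul, mul_smul_comm, Matrix.trace_smul, smul_eq_mul, mul_comm]

lemma Liou_tp_zero (hd : 2 ≤ d) (A : Fin (d ^ 2) → Mat d)
    (horth : ∀ k l : Fin (d ^ 2), Matrix.trace ((A k)ᴴ * A l) = if k = l then 1 else 0)
    (hA0 : ∀ k : Fin (d ^ 2), (k : ℕ) = 0 → A k = ((Real.sqrt d : ℝ) : ℂ)⁻¹ • 1)
    (F : Mat d →ₗ[ℂ] Mat d) (hFTP : IsTP F)
    {m l : Fin (d ^ 2)} (hm : (m : ℕ) = 0) (hl : (l : ℕ) ≠ 0) :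
    Liou A F m l = 0 := by
  have hml : m ≠ l := fun h => hl (h ▸ hm)
  set c : ℂ := ((Real.sqrt d : ℝ) : ℂ)⁻¹ with hc
  have key : ∀ X : Mat d, Matrix.trace ((A m)ᴴ * X) = star c * X.trace := by
    intro X
    rw [hA0 m hm, Matrix.conjTranspose_smul, Matrix.conjTranspose_one,
      Matrix.smul_mul, one_mul, Matrix.trace_smul, smul_eq_mul]
  have h0 : Matrix.trace ((A m)ᴴ * A l) = 0 := by rw [horth, if_neg hml]
  calc Liou A F m l = star c * (F (A l)).trace := key _
    _ = star c * (A l).trace := by rw [hFTP]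
    _ = Matrix.trace ((A m)ᴴ * A l) := (key _).symm
    _ = 0 := h0
/-- If `E, F` are trace-preserving and every singular value of the
unital block `𝓔ᵤ` is at most 1 (i.e. `‖𝓔ᵤ x‖ ≤ ‖x‖` for all vectors `x` supported on the
unital coordinates), then `u(E ∘ F) ≤ u(F)`. -/
theorem statement_18 (d : ℕ) (hd : 2 ≤ d)
    (A : Fin (d ^ 2) → Mat d)
    (horth : ∀ k l : Fin (d ^ 2), Matrix.trace ((A k)ᴴ * A l) = if k = l then 1 else 0)
    (hspan : Submodule.span ℂ (Set.range A) = ⊤)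
    (hA0 : ∀ k : Fin (d ^ 2), (k : ℕ) = 0 → A k = ((Real.sqrt d : ℝ) : ℂ)⁻¹ • 1)
    (E F : Mat d →ₗ[ℂ] Mat d) (hETP : IsTP E) (hFTP : IsTP F)
    (hop : ∀ x : Fin (d ^ 2) → ℂ,
      ∑ k ∈ Finset.univ.filter (fun k : Fin (d ^ 2) => (k : ℕ) ≠ 0),
        ‖∑ l ∈ Finset.univ.filter (fun l : Fin (d ^ 2) => (l : ℕ) ≠ 0),
            Liou A E k l * x l‖ ^ 2
        ≤ ∑ l ∈ Finset.univ.filter (fun l : Fin (d ^ 2) => (l : ℕ) ≠ 0), ‖x l‖ ^ 2) :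
    unitarity A (E ∘ₗ F) ≤ unitarity A F := by
  have hc : (0:ℝ) < (d : ℝ) ^ 2 - 1 := by
    have : (2:ℝ) ≤ d := by exact_mod_cast hd
    nlinarith
  unfold unitarity
  rw [div_le_div_iff_of_pos_right hc]
  have hcomp : ∀ k l : Fin (d ^ 2), (l : ℕ) ≠ 0 →
      Liou A (E ∘ₗ F) k l
        = ∑ m ∈ Finset.univ.filter (fun m : Fin (d ^ 2) => (m : ℕ) ≠ 0),
            Liou A E k m * Liou A F m l := by
    intro k l hl
    rw [Liou_comp A horth hspan E F k l]
    symm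
    apply Finset.sum_filter_of_ne
    intro m _ hne hm0
    exact hne (by rw [Liou_tp_zero hd A horth hA0 F hFTP hm0 hl, mul_zero])
  conv_lhs => rw [Finset.sum_comm]
  conv_rhs => rw [Finset.sum_comm]
  apply Finset.sum_le_sum
  intro l hl
  have hl' : (l : ℕ) ≠ 0 := (Finset.mem_filter.mp hl).2
  calc ∑ k ∈ Finset.univ.filter (fun k : Fin (d ^ 2) => (k : ℕ) ≠ 0),
        ‖Liou A (E ∘ₗ F) k l‖ ^ 2
      = ∑ k ∈ Finset.univ.filter (fun k : Fin (d ^ 2) => (k : ℕ) ≠ 0),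
        ‖∑ m ∈ Finset.univ.filter (fun m : Fin (d ^ 2) => (m : ℕ) ≠ 0),
            Liou A E k m * Liou A F m l‖ ^ 2 := by
        exact Finset.sum_congr rfl fun k _ => by rw [hcomp k l hl']
    _ ≤ _ := hop (fun m => Liou A F m l)
end
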